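/- arXiv:2008.02876 — 4 statements merged into one kernel-verified Lean document; each statement's English description precedes it below -/
import Mathlib

section
/- For every real number a with 0 < a < 1/2 and all real numbers u ≠ v, one has ∫_ℝ (u−y)_+^{a−1} (v−y)_+^{a−1} dy = B(a, 1−2a) · |u−v|^{2a−1}. -/
open MeasureTheory Real Set

lemma real_beta_Ioo {p q : ℝ} (hp : 0 < p) (hq : 0 < q) :
    ∫ x in Ioo (0:ℝ) 1, x ^ (p - 1) * (1 - x) ^ (q - 1)
      = Real.Gamma p * Real.Gamma q / Real.Gamma (p + q) := by
  have h := Complex.Gamma_mul_Gamma_eq_betaIntegral (s := (p:ℂ)) (t := (q:ℂ))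
    (by simpa using hp) (by simpa using hq)
  have hbeta : Complex.betaIntegral p q
      = ((∫ x in (0:ℝ)..1, x ^ (p - 1) * (1 - x) ^ (q - 1) : ℝ) : ℂ) := by
    rw [Complex.betaIntegral, ← intervalIntegral.integral_ofReal]
    apply intervalIntegral.integral_congr
    intro x hx
    rw [Set.uIcc_of_le (by norm_num : (0:ℝ) ≤ 1)] at hx
    show (x:ℂ) ^ ((p:ℂ) - 1) * (1 - (x:ℂ)) ^ ((q:ℂ) - 1) = ((x ^ (p - 1) * (1 - x) ^ (q - 1) : ℝ) : ℂ)
    rw [Complex.ofReal_mul, Complex.ofReal_cpow hx.1 (p - 1),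
      Complex.ofReal_cpow (by linarith [hx.2] : (0:ℝ) ≤ 1 - x) (q - 1)]
    push_cast
    ring
  rw [hbeta, Complex.Gamma_ofReal, Complex.Gamma_ofReal, ← Complex.ofReal_add,
    Complex.Gamma_ofReal, ← Complex.ofReal_mul, ← Complex.ofReal_mul] at h
  have h' : Real.Gamma p * Real.Gamma q
      = Real.Gamma (p + q) * ∫ x in (0:ℝ)..1, x ^ (p - 1) * (1 - x) ^ (q - 1) :=
    mod_cast h
  rw [intervalIntegral.integral_of_le (by norm_num : (0:ℝ) ≤ 1),
    MeasureTheory.integral_Ioc_eq_integral_Ioo] at h'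
  have hG : Real.Gamma (p + q) ≠ 0 := (Real.Gamma_pos_of_pos (by linarith)).ne'
  rw [eq_div_iff hG]
  linarith [h']

lemma key (a u v : ℝ) (ha : 0 < a) (ha' : a < 1/2) (h : u < v) :
    ∫ y : ℝ, (max (u - y) 0) ^ (a - 1) * (max (v - y) 0) ^ (a - 1)
      = (Real.Gamma a * Real.Gamma (1 - 2*a) / Real.Gamma (a + (1 - 2*a)))
        * |u - v| ^ (2*a - 1) := by
  set c := v - u with hcdef
  have hc : 0 < c := by simp [hcdef]; linarith
  set g : ℝ → ℝ := fun y => (max (u - y) 0) ^ (a - 1) * (max (v - y) 0) ^ (a - 1) with hg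
  set f : ℝ → ℝ := fun x => u + c - c / x with hf
  -- restrict to Iio u
  have h1 : ∫ y : ℝ, g y = ∫ y in Set.Iio u, g y := by
    rw [MeasureTheory.setIntegral_eq_integral_of_forall_compl_eq_zero]
    intro y hy
    simp only [Set.mem_Iio, not_lt] at hy
    have : max (u - y) 0 = 0 := max_eq_right (by linarith)
    rw [hg]; simp only [this, Real.zero_rpow (by linarith : a - 1 ≠ 0), zero_mul]
  -- image
  have himg : f '' Set.Ioo 0 1 = Set.Iio u := by
    ext y
    constructor
    · rintro ⟨x, ⟨hx0, hx1⟩, rfl⟩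
      have : c < c / x := by
        rw [lt_div_iff₀ hx0]; nlinarith
      simp only [hf, Set.mem_Iio]; linarith
    · intro hy
      simp only [Set.mem_Iio] at hy
      refine ⟨c / (c + (u - y)), ⟨div_pos hc (by linarith), ?_⟩, ?_⟩
      · rw [div_lt_one (by linarith)]; linarith
      · simp only [hf]
        rw [div_div_eq_mul_div, mul_comm c (c + (u - y)), mul_div_assoc,
          div_self hc.ne', mul_one]
        ring
  -- derivative
  have hderiv : ∀ x ∈ Set.Ioo (0:ℝ) 1, HasDerivWithinAt f (c / x^2) (Set.Ioo 0 1) x := by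
    intro x hx
    have := ((hasDerivAt_inv hx.1.ne').const_mul c).const_sub (u + c)
    simp only [div_eq_mul_inv c]
    refine (this.hasDerivWithinAt.congr_of_mem (fun y _ => ?_) hx).congr_deriv ?_
    · simp only [hf, div_eq_mul_inv]
    · ring
  have hinj : Set.InjOn f (Set.Ioo 0 1) := by
    intro x hx y hy hxy
    simp only [hf] at hxy
    have h2 : c / x = c / y := by linarith
    rw [div_eq_div_iff hx.1.ne' hy.1.ne'] at h2
    exact (mul_left_cancel₀ hc.ne' h2).symm
  rw [h1, ← himg, integral_image_eq_integral_abs_deriv_smul measurableSet_Ioo hderiv hinj]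
  have h2 : ∀ x ∈ Set.Ioo (0:ℝ) 1, |c / x^2| • g (f x)
      = c ^ (2*a - 1) * (x ^ ((1 - 2*a) - 1) * (1 - x) ^ (a - 1)) := by
    intro x ⟨hx0, hx1⟩
    have hx1' : 0 < 1 - x := by linarith
    have e1 : u - f x = c * (1 - x) / x := by simp only [hf]; field_simp; ring
    have e2 : v - f x = c / x := by simp only [hf]; field_simp; ring
    have m1 : max (u - f x) 0 = c * (1 - x) / x := by
      rw [e1, max_eq_left]; positivity
    have m2 : max (v - f x) 0 = c / x := by
      rw [e2, max_eq_left]; positivity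
    rw [hg, smul_eq_mul]
    simp only [m1, m2, abs_of_pos (by positivity : (0:ℝ) < c / x^2)]
    rw [Real.div_rpow (by positivity) hx0.le, Real.div_rpow hc.le hx0.le,
      Real.mul_rpow hc.le hx1'.le]
    rw [show (2*a - 1 : ℝ) = (a-1) + (a-1) + 1 by ring, Real.rpow_add hc, Real.rpow_add hc,
      Real.rpow_one, show ((1-2*a) - 1 : ℝ) = (-(a-1)) + (-(a-1)) + (-2) by ring,
      Real.rpow_add hx0, Real.rpow_add hx0, Real.rpow_neg hx0.le, Real.rpow_neg hx0.le,
      show ((2:ℝ)) = ((2:ℕ):ℝ) by norm_num, Real.rpow_natCast]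
    field_simp
  rw [MeasureTheory.setIntegral_congr_fun measurableSet_Ioo h2,
    MeasureTheory.integral_const_mul, real_beta_Ioo (by linarith) ha]
  have habs : |u - v| = c := by rw [abs_sub_comm, abs_of_pos hc]
  rw [habs, show (1 - 2*a + a : ℝ) = a + (1 - 2*a) by ring]
  ring


/-- Beta-type convolution identity: for `0 < a < 1/2` and `u ≠ v`,
`∫_ℝ (u−y)_+^(a−1) (v−y)_+^(a−1) dy = B(a, 1−2a) · |u−v|^(2a−1)`,
where `B(p,q) = Γ(p)Γ(q)/Γ(p+q)` and `(x)_+^c = (max x 0)^c` with `0^c = 0`. -/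
theorem beta_convolution_identity (a u v : ℝ) (ha : 0 < a) (ha' : a < 1/2) (huv : u ≠ v) :
    ∫ y : ℝ, (max (u - y) 0) ^ (a - 1) * (max (v - y) 0) ^ (a - 1)
      = (Real.Gamma a * Real.Gamma (1 - 2*a) / Real.Gamma (a + (1 - 2*a)))
        * |u - v| ^ (2*a - 1) := by
  rcases lt_or_gt_of_ne huv with h | h
  · exact key a u v ha ha' h
  · have hswap : (fun y : ℝ => (max (u - y) 0) ^ (a - 1) * (max (v - y) 0) ^ (a - 1))
        = fun y : ℝ => (max (v - y) 0) ^ (a - 1) * (max (u - y) 0) ^ (a - 1) :=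
      funext fun y => mul_comm _ _
    rw [hswap, abs_sub_comm]
    exact key a v u ha ha' h
end

section
/- Fix integers m, k, k' ≥ 1, H0 ∈ (1/2,1), t, t' ∈ ℝ, and a measurable function x : ℝ → [0,∞]. Let β_{j,q} (for 1 ≤ q < j ≤ k), β'_{j',q'} (for 1 ≤ q' < j' ≤ k') and γ_{j,j'} (for 1 ≤ j ≤ k, 1 ≤ j' ≤ k') be nonnegative integers such that for every j ∈ {1,…,k}: ∑_{q<j} β_{j,q} + ∑_{p>j} β_{p,j} + ∑_{j'=1}^{k'} γ_{j,j'} = m, and for every j' ∈ {1,…,k'}: ∑_{q'<j'} β'_{j',q'} + ∑_{p'>j'} β'_{p',j'} + ∑_{j=1}^{k} γ_{j,j'} = m. Set A(u,v) = ∫_{(−∞,u]} ∫_{(−∞,v]} x(u−a) x(v−b) |a−b|^{m(2H0−2)} db da, b = ∑_{j>q} β_{j,q}, b' = ∑_{j'>q'} β'_{j',q'}, and c = ∑_{j,j'} γ_{j,j'}. Then, as an inequality in [0,∞]: ∫_{(−∞,t]^k} ∫_{(−∞,t']^{k'}} ∏_{j=1}^k x(t−s_j) ∏_{j'=1}^{k'}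 x(t'−s'_{j'}) ∏_{q<j} |s_j−s_q|^{β_{j,q}(2H0−2)} ∏_{q'<j'} |s'_{j'}−s'_{q'}|^{β'_{j',q'}(2H0−2)} ∏_{j,j'} |s_j−s'_{j'}|^{γ_{j,j'}(2H0−2)} ds' ds ≤ A(t,t)^{b/m} · A(t',t')^{b'/m} · A(t,t')^{c/m}. -/
open MeasureTheory Real Finset

/-- `A(u,v) = ∫_{(−∞,u]} ∫_{(−∞,v]} x(u−a) x(v−b) |a−b|^(m(2H0−2)) db da`, in `[0,∞]`. -/
noncomputable def pairIntegral (m : ℕ) (H0 : ℝ) (x : ℝ → ENNReal) (u v : ℝ) : ENNReal :=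
  ∫⁻ a in Set.Iic u, ∫⁻ b in Set.Iic v,
    x (u - a) * x (v - b) * ENNReal.ofReal (|a - b| ^ ((m : ℝ) * (2*H0 - 2)))

/-! ### Auxiliary general lemmas -/

theorem prod_rpow_sum {ι : Type*} (a : ENNReal) (s : Finset ι) (θ : ι → ℝ)
    (hθ : ∀ i ∈ s, 0 ≤ θ i) : ∏ i ∈ s, a ^ θ i = a ^ (∑ i ∈ s, θ i) := by
  classical
  induction s using Finset.induction with
  | empty => simp
  | @insert i s hi ih =>
    rw [Finset.prod_insert hi, Finset.sum_insert hi,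
      ENNReal.rpow_add_of_nonneg _ _ (hθ i (mem_insert_self i s))
        (Finset.sum_nonneg fun j hj => hθ j (mem_insert_of_mem hj)),
      ih (fun j hj => hθ j (mem_insert_of_mem hj))]

theorem pi_restrict_eq {ι : Type*} [Fintype ι] {α : ι → Type*} [∀ i, MeasurableSpace (α i)]
    (μ : ∀ i, Measure (α i)) [∀ i, SigmaFinite (μ i)] (s : ∀ i, Set (α i))
    (hs : ∀ i, MeasurableSet (s i)) :
    (Measure.pi μ).restrict (Set.univ.pi s) = Measure.pi (fun i => (μ i).restrict (s i)) := by
  refine (Measure.pi_eq (μ := fun i => (μ i).restrict (s i)) fun c hc => ?_).symm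
  rw [Measure.restrict_apply (MeasurableSet.univ_pi hc), ← Set.pi_inter_distrib, Measure.pi_pi]
  exact Finset.prod_congr rfl fun i _ => (Measure.restrict_apply (hc i)).symm

/-- Finner-type / graph Hölder inequality, proved by induction on the set of integrated
variables using marginals. -/
theorem finner_ineq {δ : Type*} [DecidableEq δ] {α : δ → Type*} [∀ i, MeasurableSpace (α i)]
    (μ : ∀ i, Measure (α i)) [∀ i, SigmaFinite (μ i)]
    {ε : Type*} [DecidableEq ε] (E : Finset ε) (S : ε → Finset δ)
    (f : ε → (∀ i, α i) → ENNReal) (hf : ∀ e ∈ E, Measurable (f e))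
    (hdep : ∀ e ∈ E, ∀ u v : ∀ i, α i, (∀ i ∈ S e, u i = v i) → f e u = f e v)
    (θ : ε → ℝ) (hθ : ∀ e ∈ E, 0 ≤ θ e)
    (A : Finset δ) :
    (∀ i ∈ A, ∑ e ∈ E.filter (fun e => i ∈ S e), θ e = 1) →
    ∀ z, (∫⋯∫⁻_A, (fun y => ∏ e ∈ E, f e y ^ θ e) ∂μ) z
      ≤ ∏ e ∈ E, ((∫⋯∫⁻_(S e ∩ A), f e ∂μ) z) ^ θ e := by
  classical
  induction A using Finset.induction with
  | empty => intro _ z; simp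
  | @insert i A hi ih =>
    intro hdeg z
    have hF : Measurable fun y => ∏ e ∈ E, f e y ^ θ e :=
      Finset.measurable_prod _ fun e he => (hf e he).pow_const (θ e)
    rw [lmarginal_insert _ hF hi]
    have step1 : ∀ xᵢ, (∫⋯∫⁻_A, (fun y => ∏ e ∈ E, f e y ^ θ e) ∂μ) (Function.update z i xᵢ)
        ≤ ∏ e ∈ E, ((∫⋯∫⁻_(S e ∩ A), f e ∂μ) (Function.update z i xᵢ)) ^ θ e :=
      fun xᵢ => ih (fun i' hi' => hdeg i' (mem_insert_of_mem hi')) _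
    have hGconst : ∀ e ∈ E, i ∉ S e → ∀ xᵢ,
        (∫⋯∫⁻_(S e ∩ A), f e ∂μ) (Function.update z i xᵢ) = (∫⋯∫⁻_(S e ∩ A), f e ∂μ) z := by
      intro e he hiS xᵢ
      have hiSA : i ∉ S e ∩ A := fun h => hiS (Finset.mem_of_mem_inter_left h)
      rw [lmarginal_update_of_notMem (hf e he) hiSA]
      have : (f e ∘ fun v => Function.update v i xᵢ) = f e := by
        funext v
        refine hdep e he _ _ fun i' hi' => ?_
        have hne : i' ≠ i := fun h => hiS (h ▸ hi')
        exact Function.update_of_ne hne _ _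
      rw [this]
    have hmeas1 : Measurable fun xᵢ =>
        ∏ e ∈ E.filter (fun e => i ∈ S e),
          ((∫⋯∫⁻_(S e ∩ A), f e ∂μ) (Function.update z i xᵢ)) ^ θ e :=
      Finset.measurable_prod _ fun e he =>
        (((hf e (Finset.mem_of_mem_filter e he)).lmarginal μ).comp
          (measurable_update z)).pow_const (θ e)
    calc ∫⁻ xᵢ, (∫⋯∫⁻_A, (fun y => ∏ e ∈ E, f e y ^ θ e) ∂μ) (Function.update z i xᵢ) ∂μ i
        ≤ ∫⁻ xᵢ, ∏ e ∈ E, ((∫⋯∫⁻_(S e ∩ A), f e ∂μ) (Function.update z i xᵢ)) ^ θ e ∂μ i :=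
          lintegral_mono step1
      _ = ∫⁻ xᵢ, (∏ e ∈ E.filter (fun e => i ∈ S e),
              ((∫⋯∫⁻_(S e ∩ A), f e ∂μ) (Function.update z i xᵢ)) ^ θ e)
            * ∏ e ∈ E.filter (fun e => ¬ i ∈ S e),
              ((∫⋯∫⁻_(S e ∩ A), f e ∂μ) z) ^ θ e ∂μ i := by
          refine lintegral_congr fun xᵢ => ?_
          rw [← Finset.prod_filter_mul_prod_filter_not E (fun e => i ∈ S e)]
          congr 1
          refine Finset.prod_congr rfl fun e he => ?_
          rw [hGconst e (Finset.mem_of_mem_filter e he) (Finset.mem_filter.1 he).2]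
      _ = (∫⁻ xᵢ, ∏ e ∈ E.filter (fun e => i ∈ S e),
              ((∫⋯∫⁻_(S e ∩ A), f e ∂μ) (Function.update z i xᵢ)) ^ θ e ∂μ i)
            * ∏ e ∈ E.filter (fun e => ¬ i ∈ S e),
              ((∫⋯∫⁻_(S e ∩ A), f e ∂μ) z) ^ θ e :=
          lintegral_mul_const _ hmeas1
      _ ≤ (∏ e ∈ E.filter (fun e => i ∈ S e),
              (∫⁻ xᵢ, (∫⋯∫⁻_(S e ∩ A), f e ∂μ) (Function.update z i xᵢ) ∂μ i) ^ θ e)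
            * ∏ e ∈ E.filter (fun e => ¬ i ∈ S e),
              ((∫⋯∫⁻_(S e ∩ A), f e ∂μ) z) ^ θ e := by
          refine mul_le_mul_left ?_ _
          exact ENNReal.lintegral_prod_norm_pow_le _
            (fun e he => (((hf e (Finset.mem_of_mem_filter e he)).lmarginal μ).comp
              (measurable_update z)).aemeasurable)
            (hdeg i (mem_insert_self i A))
            (fun e he => hθ e (Finset.mem_of_mem_filter e he))
      _ = ∏ e ∈ E, ((∫⋯∫⁻_(S e ∩ insert i A), f e ∂μ) z) ^ θ e := by
          rw [← Finset.prod_filter_mul_prod_filter_not E (fun e => i ∈ S e)]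
          congr 1
          · refine Finset.prod_congr rfl fun e he => ?_
            have hiS : i ∈ S e := (Finset.mem_filter.1 he).2
            have hiSA : i ∉ S e ∩ A := fun h => hi (Finset.mem_of_mem_inter_right h)
            rw [Finset.inter_insert_of_mem hiS,
              lmarginal_insert _ (hf e (Finset.mem_of_mem_filter e he)) hiSA]
          · refine Finset.prod_congr rfl fun e he => ?_
            rw [Finset.inter_insert_of_notMem (Finset.mem_filter.1 he).2]

theorem block_transform {ι₁ ι₂ : Type*} [Fintype ι₁] [Fintype ι₂]
    (X1 : ι₁ → ENNReal) (X2 : ι₂ → ENNReal) (K : ι₁ → ι₂ → ℝ) (w : ι₁ → ι₂ → ℕ)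
    (m : ℕ) (hm : (m : ℝ) ≠ 0) (c : ℝ) :
    ∏ j : ι₁, ∏ q : ι₂,
        (X1 j * X2 q * ENNReal.ofReal (|K j q| ^ ((m : ℝ) * c))) ^ ((w j q : ℝ) / m)
      = (∏ j : ι₁, X1 j ^ ((∑ q : ι₂, (w j q : ℝ)) / m))
        * (∏ q : ι₂, X2 q ^ ((∑ j : ι₁, (w j q : ℝ)) / m))
        * ENNReal.ofReal (∏ j : ι₁, ∏ q : ι₂, |K j q| ^ ((w j q : ℝ) * c)) := by
  have hθ : ∀ (j : ι₁) (q : ι₂), (0 : ℝ) ≤ (w j q : ℝ) / m := fun j q => by positivity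
  have hterm : ∀ (j : ι₁) (q : ι₂),
      (X1 j * X2 q * ENNReal.ofReal (|K j q| ^ ((m : ℝ) * c))) ^ ((w j q : ℝ) / m)
      = X1 j ^ ((w j q : ℝ) / m) * X2 q ^ ((w j q : ℝ) / m)
        * ENNReal.ofReal (|K j q| ^ ((w j q : ℝ) * c)) := by
    intro j q
    rw [ENNReal.mul_rpow_of_nonneg _ _ (hθ j q), ENNReal.mul_rpow_of_nonneg _ _ (hθ j q),
      ENNReal.ofReal_rpow_of_nonneg (Real.rpow_nonneg (abs_nonneg _) _) (hθ j q),
      ← Real.rpow_mul (abs_nonneg _),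
      show (m : ℝ) * c * ((w j q : ℝ) / m) = (w j q : ℝ) * c by field_simp]
  calc ∏ j : ι₁, ∏ q : ι₂,
        (X1 j * X2 q * ENNReal.ofReal (|K j q| ^ ((m : ℝ) * c))) ^ ((w j q : ℝ) / m)
      = ∏ j : ι₁, ∏ q : ι₂, (X1 j ^ ((w j q : ℝ) / m) * X2 q ^ ((w j q : ℝ) / m)
          * ENNReal.ofReal (|K j q| ^ ((w j q : ℝ) * c))) :=
        Finset.prod_congr rfl fun j _ => Finset.prod_congr rfl fun q _ => hterm j q
    _ = (∏ j : ι₁, ∏ q : ι₂, X1 j ^ ((w j q : ℝ) / m))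
        * (∏ j : ι₁, ∏ q : ι₂, X2 q ^ ((w j q : ℝ) / m))
        * (∏ j : ι₁, ∏ q : ι₂, ENNReal.ofReal (|K j q| ^ ((w j q : ℝ) * c))) := by
        simp_rw [Finset.prod_mul_distrib]
    _ = (∏ j : ι₁, X1 j ^ ((∑ q : ι₂, (w j q : ℝ)) / m))
        * (∏ q : ι₂, X2 q ^ ((∑ j : ι₁, (w j q : ℝ)) / m))
        * ENNReal.ofReal (∏ j : ι₁, ∏ q : ι₂, |K j q| ^ ((w j q : ℝ) * c)) := by
        congr 1
        · congr 1
          · refine Finset.prod_congr rfl fun j _ => ?_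
            rw [prod_rpow_sum _ _ _ (fun q _ => hθ j q), ← Finset.sum_div]
          · rw [Finset.prod_comm]
            refine Finset.prod_congr rfl fun q _ => ?_
            rw [prod_rpow_sum _ _ _ (fun j _ => hθ j q), ← Finset.sum_div]
        · rw [ENNReal.ofReal_prod_of_nonneg
            (fun j _ => Finset.prod_nonneg fun q _ => Real.rpow_nonneg (abs_nonneg _) _)]
          exact Finset.prod_congr rfl fun j _ => by
            rw [ENNReal.ofReal_prod_of_nonneg
              (fun q _ => Real.rpow_nonneg (abs_nonneg _) _)]

/-! ### The combinatorial set-up: nodes, edges, weights -/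

abbrev tgD (k k' : ℕ) := Fin k ⊕ Fin k'
abbrev tgE (k k' : ℕ) := (Fin k × Fin k) ⊕ ((Fin k' × Fin k') ⊕ (Fin k × Fin k'))

variable {k k' : ℕ}

def tgS : tgE k k' → Finset (tgD k k')
  | .inl (j, q) => {.inl j, .inl q}
  | .inr (.inl (j, q)) => {.inr j, .inr q}
  | .inr (.inr (j, j')) => {.inl j, .inr j'}

def tgW (β : Fin k → Fin k → ℕ) (β' : Fin k' → Fin k' → ℕ) (γ : Fin k → Fin k' → ℕ) :
    tgE k k' → ℕ
  | .inl (j, q) => if q < j then β j q else 0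
  | .inr (.inl (j, q)) => if q < j then β' j q else 0
  | .inr (.inr (j, j')) => γ j j'

noncomputable def tgF (m : ℕ) (H0 t t' : ℝ) (x : ℝ → ENNReal) :
    tgE k k' → (tgD k k' → ℝ) → ENNReal
  | .inl (j, q) => fun y => x (t - y (.inl j)) * x (t - y (.inl q)) *
      ENNReal.ofReal (|y (.inl j) - y (.inl q)| ^ ((m : ℝ) * (2*H0 - 2)))
  | .inr (.inl (j, q)) => fun y => x (t' - y (.inr j)) * x (t' - y (.inr q)) *
      ENNReal.ofReal (|y (.inr j) - y (.inr q)| ^ ((m : ℝ) * (2*H0 - 2)))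
  | .inr (.inr (j, j')) => fun y => x (t - y (.inl j)) * x (t' - y (.inr j')) *
      ENNReal.ofReal (|y (.inl j) - y (.inr j')| ^ ((m : ℝ) * (2*H0 - 2)))

noncomputable def tgμ (k k' : ℕ) (t t' : ℝ) : tgD k k' → Measure ℝ := fun i =>
  MeasureTheory.volume.restrict (Set.Iic (Sum.elim (fun _ : Fin k => t) (fun _ : Fin k' => t') i))

instance (k k' : ℕ) (t t' : ℝ) (i : tgD k k') : SigmaFinite (tgμ k k' t t' i) := by
  unfold tgμ; infer_instance

theorem tgF_measurable (m : ℕ) (H0 t t' : ℝ) (x : ℝ → ENNReal) (hx : Measurable x)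
    (e : tgE k k') : Measurable (tgF m H0 t t' x e) := by
  have key : ∀ (u v : ℝ) (i i' : tgD k k'), Measurable (fun y : tgD k k' → ℝ =>
      x (u - y i) * x (v - y i') *
        ENNReal.ofReal (|y i - y i'| ^ ((m : ℝ) * (2*H0 - 2)))) := by
    intro u v i i'
    fun_prop
  rcases e with ⟨j, q⟩ | ⟨j, q⟩ | ⟨j, j'⟩ <;> exact key _ _ _ _

theorem tgW_node_inl (β : Fin k → Fin k → ℕ) (β' : Fin k' → Fin k' → ℕ)
    (γ : Fin k → Fin k' → ℕ) (j : Fin k) :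
    ∑ e ∈ univ.filter (fun e => Sum.inl j ∈ tgS e), tgW β β' γ e
      = (∑ q ∈ univ.filter (fun q => q < j), β j q)
        + (∑ p ∈ univ.filter (fun p => j < p), β p j)
        + (∑ j' : Fin k', γ j j') := by
  classical
  rw [Finset.sum_filter, Fintype.sum_sum_type, Fintype.sum_sum_type,
    Fintype.sum_prod_type, Fintype.sum_prod_type, Fintype.sum_prod_type]
  have h2 : ∑ p : Fin k', ∑ q : Fin k',
      (if Sum.inl j ∈ tgS (k := k) (k' := k') (.inr (.inl (p, q)))
        then tgW β β' γ (.inr (.inl (p, q))) else 0) = 0 := by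
    simp [tgS]
  have h3 : ∑ p : Fin k, ∑ j' : Fin k',
      (if Sum.inl j ∈ tgS (k := k) (k' := k') (.inr (.inr (p, j')))
        then tgW β β' γ (.inr (.inr (p, j'))) else 0)
      = ∑ j' : Fin k', γ j j' := by
    simp only [tgS, tgW, Finset.mem_insert, Finset.mem_singleton, Sum.inl.injEq, reduceCtorEq,
      or_false]
    rw [Finset.sum_comm]
    simp [Finset.sum_ite_eq, eq_comm]
  have h1 : ∑ p : Fin k, ∑ q : Fin k,
      (if Sum.inl j ∈ tgS (k := k) (k' := k') (.inl (p, q)) then tgW β β' γ (.inl (p, q)) else 0)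
      = (∑ q ∈ univ.filter (fun q => q < j), β j q)
        + (∑ p ∈ univ.filter (fun p => j < p), β p j) := by
    simp only [tgS, tgW, Finset.mem_insert, Finset.mem_singleton, Sum.inl.injEq]
    have split : ∀ p q : Fin k,
        (if j = p ∨ j = q then (if q < p then β p q else 0) else 0)
        = (if j = p then (if q < p then β p q else 0) else 0)
          + (if j = q then (if j < p then β p j else 0) else 0) := by
      intro p q
      by_cases h1 : j = p <;> by_cases h2 : j = q
      · subst h1; subst h2; simp [lt_irrefl]
      · subst h1; simp [h2, lt_irrefl]
      · subst h2; simp [h1]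
      · simp [h1, h2]
    simp_rw [split, Finset.sum_add_distrib]
    congr 1
    · have pull : ∀ p : Fin k, (∑ q : Fin k, if j = p then (if q < p then β p q else 0) else 0)
          = if j = p then (∑ q : Fin k, if q < p then β p q else 0) else 0 := by
        intro p; split_ifs <;> simp
      simp_rw [pull, Finset.sum_ite_eq, Finset.mem_univ, if_true, Finset.sum_filter]
    · have inner : ∀ p : Fin k, (∑ q : Fin k, if j = q then (if j < p then β p j else 0) else 0)
          = (if j < p then β p j else 0) := by
        intro p; rw [Finset.sum_ite_eq]; simp
      simp_rw [inner, Finset.sum_filter]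
  rw [h1, h2, h3]
  ring

theorem tgW_node_inr (β : Fin k → Fin k → ℕ) (β' : Fin k' → Fin k' → ℕ)
    (γ : Fin k → Fin k' → ℕ) (j' : Fin k') :
    ∑ e ∈ univ.filter (fun e => Sum.inr j' ∈ tgS e), tgW β β' γ e
      = (∑ q ∈ univ.filter (fun q => q < j'), β' j' q)
        + (∑ p ∈ univ.filter (fun p => j' < p), β' p j')
        + (∑ j : Fin k, γ j j') := by
  classical
  rw [Finset.sum_filter, Fintype.sum_sum_type, Fintype.sum_sum_type,
    Fintype.sum_prod_type, Fintype.sum_prod_type, Fintype.sum_prod_type]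
  have h0 : ∑ p : Fin k, ∑ q : Fin k,
      (if Sum.inr j' ∈ tgS (k := k) (k' := k') (.inl (p, q))
        then tgW β β' γ (.inl (p, q)) else 0) = 0 := by
    simp [tgS]
  have h3 : ∑ p : Fin k, ∑ q : Fin k',
      (if Sum.inr j' ∈ tgS (k := k) (k' := k') (.inr (.inr (p, q)))
        then tgW β β' γ (.inr (.inr (p, q))) else 0)
      = ∑ j : Fin k, γ j j' := by
    simp only [tgS, tgW, Finset.mem_insert, Finset.mem_singleton, Sum.inr.injEq, reduceCtorEq,
      false_or]
    refine Finset.sum_congr rfl fun p _ => ?_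
    rw [Finset.sum_ite_eq]; simp
  have h1 : ∑ p : Fin k', ∑ q : Fin k',
      (if Sum.inr j' ∈ tgS (k := k) (k' := k') (.inr (.inl (p, q)))
        then tgW β β' γ (.inr (.inl (p, q))) else 0)
      = (∑ q ∈ univ.filter (fun q => q < j'), β' j' q)
        + (∑ p ∈ univ.filter (fun p => j' < p), β' p j') := by
    simp only [tgS, tgW, Finset.mem_insert, Finset.mem_singleton, Sum.inr.injEq]
    have split : ∀ p q : Fin k',
        (if j' = p ∨ j' = q then (if q < p then β' p q else 0) else 0)
        = (if j' = p then (if q < p then β' p q else 0) else 0)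
          + (if j' = q then (if j' < p then β' p j' else 0) else 0) := by
      intro p q
      by_cases h1 : j' = p <;> by_cases h2 : j' = q
      · subst h1; subst h2; simp [lt_irrefl]
      · subst h1; simp [h2, lt_irrefl]
      · subst h2; simp [h1]
      · simp [h1, h2]
    simp_rw [split, Finset.sum_add_distrib]
    congr 1
    · have pull : ∀ p : Fin k', (∑ q : Fin k', if j' = p then (if q < p then β' p q else 0) else 0)
          = if j' = p then (∑ q : Fin k', if q < p then β' p q else 0) else 0 := by
        intro p; split_ifs <;> simp
      simp_rw [pull, Finset.sum_ite_eq, Finset.mem_univ, if_true, Finset.sum_filter]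
    · have inner : ∀ p : Fin k',
          (∑ q : Fin k', if j' = q then (if j' < p then β' p j' else 0) else 0)
          = (if j' < p then β' p j' else 0) := by
        intro p; rw [Finset.sum_ite_eq]; simp
      simp_rw [inner, Finset.sum_filter]
  rw [h0, h1, h3]
  ring


/-- The two-graph generalized Hölder estimate: if every node of the two graphs (with
`β, β'` edge weights inside each graph and `γ` edge weights between the graphs)
has total degree `m`, then the entangled integral is bounded by
`A(t,t)^(b/m) · A(t',t')^(b'/m) · A(t,t')^(c/m)`, as an inequality in `[0,∞]`. -/
theorem two_graph_hoelder (m k k' : ℕ) (hm : 1 ≤ m) (hk : 1 ≤ k) (hk' : 1 ≤ k')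
    (H0 : ℝ) (hH0 : 1/2 < H0) (hH0' : H0 < 1) (t t' : ℝ)
    (x : ℝ → ENNReal) (hx : Measurable x)
    (β : Fin k → Fin k → ℕ) (β' : Fin k' → Fin k' → ℕ) (γ : Fin k → Fin k' → ℕ)
    (hdeg : ∀ j : Fin k,
      (∑ q ∈ univ.filter (fun q => q < j), β j q)
        + (∑ p ∈ univ.filter (fun p => j < p), β p j)
        + (∑ j' : Fin k', γ j j') = m)
    (hdeg' : ∀ j' : Fin k',
      (∑ q' ∈ univ.filter (fun q' => q' < j'), β' j' q')
        + (∑ p' ∈ univ.filter (fun p' => j' < p'), β' p' j')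
        + (∑ j : Fin k, γ j j') = m) :
    (∫⁻ s in Set.univ.pi (fun _ : Fin k => Set.Iic t),
      ∫⁻ s' in Set.univ.pi (fun _ : Fin k' => Set.Iic t'),
        (∏ j, x (t - s j)) * (∏ j', x (t' - s' j')) *
        ENNReal.ofReal
          ((∏ j : Fin k, ∏ q ∈ univ.filter (fun q => q < j),
              |s j - s q| ^ ((β j q : ℝ) * (2*H0 - 2)))
            * (∏ j' : Fin k', ∏ q' ∈ univ.filter (fun q' => q' < j'),
                |s' j' - s' q'| ^ ((β' j' q' : ℝ) * (2*H0 - 2)))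
            * (∏ j : Fin k, ∏ j' : Fin k',
                |s j - s' j'| ^ ((γ j j' : ℝ) * (2*H0 - 2)))))
      ≤ pairIntegral m H0 x t t
          ^ (((∑ j : Fin k, ∑ q ∈ univ.filter (fun q => q < j), β j q : ℕ) : ℝ) / m)
        * pairIntegral m H0 x t' t'
          ^ (((∑ j' : Fin k', ∑ q' ∈ univ.filter (fun q' => q' < j'), β' j' q' : ℕ) : ℝ) / m)
        * pairIntegral m H0 x t t'
          ^ (((∑ j : Fin k, ∑ j' : Fin k', γ j j' : ℕ) : ℝ) / m) := by
  classical
  have hm0 : (m : ℝ) ≠ 0 := Nat.cast_ne_zero.mpr (by omega)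
  have hθnn : ∀ e : tgE k k', (0:ℝ) ≤ (tgW β β' γ e : ℝ) / m := fun e => by positivity
  set μ := tgμ k k' t t' with hμdef
  -- degree condition in the form needed by `finner_ineq`
  have hdegθ : ∀ i : tgD k k',
      ∑ e ∈ univ.filter (fun e => i ∈ tgS e), ((tgW β β' γ e : ℝ) / m) = 1 := by
    intro i
    rw [← Finset.sum_div, show (∑ e ∈ univ.filter (fun e => i ∈ tgS e), (tgW β β' γ e : ℝ))
        = ((∑ e ∈ univ.filter (fun e => i ∈ tgS e), tgW β β' γ e : ℕ) : ℝ) by push_cast; rfl]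
    cases i with
    | inl j => rw [tgW_node_inl, hdeg j]; exact div_self hm0
    | inr j' => rw [tgW_node_inr, hdeg' j']; exact div_self hm0
  -- dependence of each edge function on its own nodes only
  have hdep : ∀ e : tgE k k', ∀ u v : tgD k k' → ℝ, (∀ i ∈ tgS e, u i = v i) →
      tgF m H0 t t' x e u = tgF m H0 t t' x e v := by
    rintro (⟨j, q⟩ | ⟨j, q⟩ | ⟨j, j'⟩) u v h
    · have h1 := h (.inl j) (by simp [tgS]); have h2 := h (.inl q) (by simp [tgS])
      simp only [tgF, h1, h2]
    · have h1 := h (.inr j) (by simp [tgS]); have h2 := h (.inr q) (by simp [tgS])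
      simp only [tgF, h1, h2]
    · have h1 := h (.inl j) (by simp [tgS]); have h2 := h (.inr j') (by simp [tgS])
      simp only [tgF, h1, h2]
  have hfmeas : ∀ e : tgE k k', Measurable (tgF m H0 t t' x e) := tgF_measurable m H0 t t' x hx
  -- node sums needed for the pointwise identity
  have hnodek : ∀ j : Fin k,
      (∑ q : Fin k, ((if q < j then β j q else 0 : ℕ) : ℝ)) / m
        + (∑ p : Fin k, ((if j < p then β p j else 0 : ℕ) : ℝ)) / m
        + (∑ j' : Fin k', (γ j j' : ℝ)) / m = 1 := by
    intro j
    have hN : (∑ q : Fin k, (if q < j then β j q else 0))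
        + (∑ p : Fin k, (if j < p then β p j else 0)) + (∑ j' : Fin k', γ j j') = m := by
      rw [← Finset.sum_filter, ← Finset.sum_filter]; exact hdeg j
    rw [← add_div, ← add_div]
    rw [show (∑ q : Fin k, ((if q < j then β j q else 0 : ℕ) : ℝ))
        + (∑ p : Fin k, ((if j < p then β p j else 0 : ℕ) : ℝ))
        + (∑ j' : Fin k', (γ j j' : ℝ)) = ((m : ℕ) : ℝ) by rw [← hN]; push_cast; ring]
    exact div_self hm0
  have hnodek' : ∀ j' : Fin k',
      (∑ q : Fin k', ((if q < j' then β' j' q else 0 : ℕ) : ℝ)) / m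
        + (∑ p : Fin k', ((if j' < p then β' p j' else 0 : ℕ) : ℝ)) / m
        + (∑ j : Fin k, (γ j j' : ℝ)) / m = 1 := by
    intro j'
    have hN : (∑ q : Fin k', (if q < j' then β' j' q else 0))
        + (∑ p : Fin k', (if j' < p then β' p j' else 0)) + (∑ j : Fin k, γ j j') = m := by
      rw [← Finset.sum_filter, ← Finset.sum_filter]; exact hdeg' j'
    rw [← add_div, ← add_div]
    rw [show (∑ q : Fin k', ((if q < j' then β' j' q else 0 : ℕ) : ℝ))
        + (∑ p : Fin k', ((if j' < p then β' p j' else 0 : ℕ) : ℝ))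
        + (∑ j : Fin k, (γ j j' : ℝ)) = ((m : ℕ) : ℝ) by rw [← hN]; push_cast; ring]
    exact div_self hm0
  -- the pointwise identity
  have hpoint : ∀ z : tgD k k' → ℝ,
      (∏ j, x (t - z (Sum.inl j))) * (∏ j', x (t' - z (Sum.inr j'))) *
        ENNReal.ofReal
          ((∏ j : Fin k, ∏ q ∈ univ.filter (fun q => q < j),
              |z (Sum.inl j) - z (Sum.inl q)| ^ ((β j q : ℝ) * (2*H0 - 2)))
            * (∏ j' : Fin k', ∏ q' ∈ univ.filter (fun q' => q' < j'),
                |z (Sum.inr j') - z (Sum.inr q')| ^ ((β' j' q' : ℝ) * (2*H0 - 2)))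
            * (∏ j : Fin k, ∏ j' : Fin k',
                |z (Sum.inl j) - z (Sum.inr j')| ^ ((γ j j' : ℝ) * (2*H0 - 2))))
      = ∏ e : tgE k k', tgF m H0 t t' x e z ^ ((tgW β β' γ e : ℝ) / m) := by
    intro z
    rw [Fintype.prod_sum_type, Fintype.prod_sum_type, Fintype.prod_prod_type,
      Fintype.prod_prod_type, Fintype.prod_prod_type]
    simp only [tgF, tgW]
    rw [block_transform (fun j : Fin k => x (t - z (Sum.inl j)))
        (fun q : Fin k => x (t - z (Sum.inl q)))
        (fun j q => z (Sum.inl j) - z (Sum.inl q))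
        (fun j q => if q < j then β j q else 0) m hm0 (2*H0 - 2),
      block_transform (fun j : Fin k' => x (t' - z (Sum.inr j)))
        (fun q : Fin k' => x (t' - z (Sum.inr q)))
        (fun j q => z (Sum.inr j) - z (Sum.inr q))
        (fun j q => if q < j then β' j q else 0) m hm0 (2*H0 - 2),
      block_transform (fun j : Fin k => x (t - z (Sum.inl j)))
        (fun j' : Fin k' => x (t' - z (Sum.inr j')))
        (fun j j' => z (Sum.inl j) - z (Sum.inr j')) γ m hm0 (2*H0 - 2)]
    have hQ1 : (∏ j : Fin k, ∏ q : Fin k,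
        |z (Sum.inl j) - z (Sum.inl q)| ^ (((if q < j then β j q else 0 : ℕ) : ℝ) * (2*H0 - 2)))
        = ∏ j : Fin k, ∏ q ∈ univ.filter (fun q => q < j),
            |z (Sum.inl j) - z (Sum.inl q)| ^ ((β j q : ℝ) * (2*H0 - 2)) := by
      refine Finset.prod_congr rfl fun j _ => ?_
      rw [Finset.prod_filter]
      refine Finset.prod_congr rfl fun q _ => ?_
      by_cases hq : q < j
      · simp [hq]
      · simp [hq]
    have hQ2 : (∏ j : Fin k', ∏ q : Fin k',
        |z (Sum.inr j) - z (Sum.inr q)| ^ (((if q < j then β' j q else 0 : ℕ) : ℝ) * (2*H0 - 2)))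
        = ∏ j' : Fin k', ∏ q' ∈ univ.filter (fun q' => q' < j'),
            |z (Sum.inr j') - z (Sum.inr q')| ^ ((β' j' q' : ℝ) * (2*H0 - 2)) := by
      refine Finset.prod_congr rfl fun j _ => ?_
      rw [Finset.prod_filter]
      refine Finset.prod_congr rfl fun q _ => ?_
      by_cases hq : q < j
      · simp [hq]
      · simp [hq]
    rw [hQ1, hQ2]
    have hXl : (∏ j : Fin k, x (t - z (Sum.inl j))
          ^ ((∑ q : Fin k, ((if q < j then β j q else 0 : ℕ) : ℝ)) / m))
        * (∏ q : Fin k, x (t - z (Sum.inl q))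
          ^ ((∑ j : Fin k, ((if q < j then β j q else 0 : ℕ) : ℝ)) / m))
        * (∏ j : Fin k, x (t - z (Sum.inl j)) ^ ((∑ j' : Fin k', (γ j j' : ℝ)) / m))
        = ∏ j : Fin k, x (t - z (Sum.inl j)) := by
      rw [← Finset.prod_mul_distrib, ← Finset.prod_mul_distrib]
      refine Finset.prod_congr rfl fun j _ => ?_
      have e1 : (0:ℝ) ≤ (∑ q : Fin k, ((if q < j then β j q else 0 : ℕ) : ℝ)) / m := by positivity
      have e2 : (0:ℝ) ≤ (∑ p : Fin k, ((if j < p then β p j else 0 : ℕ) : ℝ)) / m := by positivity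
      have e3 : (0:ℝ) ≤ (∑ j' : Fin k', (γ j j' : ℝ)) / m := by positivity
      rw [← ENNReal.rpow_add_of_nonneg _ _ e1 e2, ← ENNReal.rpow_add_of_nonneg _ _ (add_nonneg e1 e2) e3,
        hnodek j, ENNReal.rpow_one]
    have hXr : (∏ j : Fin k', x (t' - z (Sum.inr j))
          ^ ((∑ q : Fin k', ((if q < j then β' j q else 0 : ℕ) : ℝ)) / m))
        * (∏ q : Fin k', x (t' - z (Sum.inr q))
          ^ ((∑ j : Fin k', ((if q < j then β' j q else 0 : ℕ) : ℝ)) / m))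
        * (∏ j' : Fin k', x (t' - z (Sum.inr j')) ^ ((∑ j : Fin k, (γ j j' : ℝ)) / m))
        = ∏ j' : Fin k', x (t' - z (Sum.inr j')) := by
      rw [← Finset.prod_mul_distrib, ← Finset.prod_mul_distrib]
      refine Finset.prod_congr rfl fun j' _ => ?_
      have e1 : (0:ℝ) ≤ (∑ q : Fin k', ((if q < j' then β' j' q else 0 : ℕ) : ℝ)) / m := by positivity
      have e2 : (0:ℝ) ≤ (∑ p : Fin k', ((if j' < p then β' p j' else 0 : ℕ) : ℝ)) / m := by positivity
      have e3 : (0:ℝ) ≤ (∑ j : Fin k, (γ j j' : ℝ)) / m := by positivity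
      rw [← ENNReal.rpow_add_of_nonneg _ _ e1 e2, ← ENNReal.rpow_add_of_nonneg _ _ (add_nonneg e1 e2) e3,
        hnodek' j', ENNReal.rpow_one]
    have hnn1 : (0:ℝ) ≤ ∏ j : Fin k, ∏ q ∈ univ.filter (fun q => q < j),
        |z (Sum.inl j) - z (Sum.inl q)| ^ ((β j q : ℝ) * (2*H0 - 2)) :=
      Finset.prod_nonneg fun j _ => Finset.prod_nonneg fun q _ => Real.rpow_nonneg (abs_nonneg _) _
    have hnn2 : (0:ℝ) ≤ ∏ j' : Fin k', ∏ q' ∈ univ.filter (fun q' => q' < j'),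
        |z (Sum.inr j') - z (Sum.inr q')| ^ ((β' j' q' : ℝ) * (2*H0 - 2)) :=
      Finset.prod_nonneg fun j _ => Finset.prod_nonneg fun q _ => Real.rpow_nonneg (abs_nonneg _) _
    rw [ENNReal.ofReal_mul (mul_nonneg hnn1 hnn2), ENNReal.ofReal_mul hnn1, ← hXl, ← hXr]
    ring
  -- measurability of the integrand on the product space
  have hFmeas : Measurable (fun p : (Fin k → ℝ) × (Fin k' → ℝ) =>
      (∏ j, x (t - p.1 j)) * (∏ j', x (t' - p.2 j')) *
        ENNReal.ofReal
          ((∏ j : Fin k, ∏ q ∈ univ.filter (fun q => q < j),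
              |p.1 j - p.1 q| ^ ((β j q : ℝ) * (2*H0 - 2)))
            * (∏ j' : Fin k', ∏ q' ∈ univ.filter (fun q' => q' < j'),
                |p.2 j' - p.2 q'| ^ ((β' j' q' : ℝ) * (2*H0 - 2)))
            * (∏ j : Fin k, ∏ j' : Fin k',
                |p.1 j - p.2 j'| ^ ((γ j j' : ℝ) * (2*H0 - 2))))) := by
    have h1 : Measurable fun p : (Fin k → ℝ) × (Fin k' → ℝ) => ∏ j, x (t - p.1 j) :=
      Finset.measurable_prod _ fun j _ => hx.comp (by fun_prop)
    have h2 : Measurable fun p : (Fin k → ℝ) × (Fin k' → ℝ) => ∏ j', x (t' - p.2 j') :=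
      Finset.measurable_prod _ fun j _ => hx.comp (by fun_prop)
    refine (h1.mul h2).mul (Measurable.ennreal_ofReal ?_)
    refine ((Finset.measurable_prod _ fun j _ => Finset.measurable_prod _ fun q _ => ?_).mul
      (Finset.measurable_prod _ fun j _ => Finset.measurable_prod _ fun q _ => ?_)).mul
      (Finset.measurable_prod _ fun j _ => Finset.measurable_prod _ fun q _ => ?_) <;> fun_prop
  -- marginal of a pair function over its two (distinct) nodes
  have hpair : ∀ (i1 i2 : tgD k k') (u v : ℝ), i1 ≠ i2 →
      (∫⋯∫⁻_({i1, i2} : Finset (tgD k k')),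
          (fun y => x (u - y i1) * x (v - y i2) *
            ENNReal.ofReal (|y i1 - y i2| ^ ((m : ℝ) * (2*H0 - 2)))) ∂μ) (fun _ => 0)
      = ∫⁻ a, (∫⁻ b, x (u - a) * x (v - b) *
          ENNReal.ofReal (|a - b| ^ ((m : ℝ) * (2*H0 - 2))) ∂ μ i2) ∂ μ i1 := by
    intro i1 i2 u v hne
    have hgm : Measurable (fun y : tgD k k' → ℝ => x (u - y i1) * x (v - y i2) *
        ENNReal.ofReal (|y i1 - y i2| ^ ((m : ℝ) * (2*H0 - 2)))) := by fun_prop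
    rw [show ({i1, i2} : Finset (tgD k k')) = insert i1 {i2} from rfl,
      lmarginal_insert _ hgm (by simp [hne])]
    refine lintegral_congr fun a => ?_
    rw [lmarginal_singleton]
    refine lintegral_congr fun b => ?_
    simp [Function.update_of_ne hne]
  -- per-edge factor computations
  have hfac1 : ∀ p : Fin k × Fin k,
      ((∫⋯∫⁻_(tgS (Sum.inl p) ∩ Finset.univ), tgF m H0 t t' x (Sum.inl p) ∂μ) (fun _ => 0))
          ^ ((tgW β β' γ (Sum.inl p) : ℝ) / m)
        = pairIntegral m H0 x t t ^ ((tgW β β' γ (Sum.inl p) : ℝ) / m) := by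
    rintro ⟨j, q⟩
    by_cases hq : q < j
    · have hne : (Sum.inl j : tgD k k') ≠ Sum.inl q := by
        simp only [ne_eq, Sum.inl.injEq]; exact ne_of_gt hq
      congr 1
      rw [Finset.inter_univ]
      exact hpair (Sum.inl j) (Sum.inl q) t t hne
    · have h0 : tgW β β' γ (Sum.inl (j, q)) = 0 := by simp [tgW, hq]
      rw [h0]; simp
  have hfac2 : ∀ p : Fin k' × Fin k',
      ((∫⋯∫⁻_(tgS (k := k) (Sum.inr (Sum.inl p)) ∩ Finset.univ),
          tgF m H0 t t' x (Sum.inr (Sum.inl p)) ∂μ) (fun _ => 0))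
          ^ ((tgW β β' γ (Sum.inr (Sum.inl p)) : ℝ) / m)
        = pairIntegral m H0 x t' t' ^ ((tgW β β' γ (Sum.inr (Sum.inl p)) : ℝ) / m) := by
    rintro ⟨j, q⟩
    by_cases hq : q < j
    · have hne : (Sum.inr j : tgD k k') ≠ Sum.inr q := by
        simp only [ne_eq, Sum.inr.injEq]; exact ne_of_gt hq
      congr 1
      rw [Finset.inter_univ]
      exact hpair (Sum.inr j) (Sum.inr q) t' t' hne
    · have h0 : tgW β β' γ (Sum.inr (Sum.inl (j, q))) = 0 := by simp [tgW, hq]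
      rw [h0]; simp
  have hfac3 : ∀ p : Fin k × Fin k',
      ((∫⋯∫⁻_(tgS (Sum.inr (Sum.inr p)) ∩ Finset.univ),
          tgF m H0 t t' x (Sum.inr (Sum.inr p)) ∂μ) (fun _ => 0))
          ^ ((tgW β β' γ (Sum.inr (Sum.inr p)) : ℝ) / m)
        = pairIntegral m H0 x t t' ^ ((tgW β β' γ (Sum.inr (Sum.inr p)) : ℝ) / m) := by
    rintro ⟨j, j'⟩
    have hne : (Sum.inl j : tgD k k') ≠ Sum.inr j' := by simp
    congr 1
    rw [Finset.inter_univ]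
    exact hpair (Sum.inl j) (Sum.inr j') t t' hne
  -- weight sums per block
  have hsum1 : ∑ p : Fin k × Fin k, ((tgW β β' γ (Sum.inl p) : ℝ) / m)
      = ((∑ j : Fin k, ∑ q ∈ univ.filter (fun q => q < j), β j q : ℕ) : ℝ) / m := by
    rw [← Finset.sum_div]
    congr 1
    rw [Fintype.sum_prod_type,
      show ((∑ j : Fin k, ∑ q ∈ univ.filter (fun q => q < j), β j q : ℕ) : ℝ)
        = ∑ j : Fin k, ∑ q ∈ univ.filter (fun q => q < j), ((β j q : ℕ) : ℝ) by push_cast; rfl]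
    refine Finset.sum_congr rfl fun j _ => ?_
    rw [Finset.sum_filter]
    refine Finset.sum_congr rfl fun q _ => ?_
    by_cases hq : q < j <;> simp [tgW, hq]
  have hsum2 : ∑ p : Fin k' × Fin k', ((tgW β β' γ (Sum.inr (Sum.inl p)) : ℝ) / m)
      = ((∑ j' : Fin k', ∑ q' ∈ univ.filter (fun q' => q' < j'), β' j' q' : ℕ) : ℝ) / m := by
    rw [← Finset.sum_div]
    congr 1
    rw [Fintype.sum_prod_type,
      show ((∑ j' : Fin k', ∑ q' ∈ univ.filter (fun q' => q' < j'), β' j' q' : ℕ) : ℝ)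
        = ∑ j' : Fin k', ∑ q' ∈ univ.filter (fun q' => q' < j'), ((β' j' q' : ℕ) : ℝ) by
          push_cast; rfl]
    refine Finset.sum_congr rfl fun j _ => ?_
    rw [Finset.sum_filter]
    refine Finset.sum_congr rfl fun q _ => ?_
    by_cases hq : q < j <;> simp [tgW, hq]
  have hsum3 : ∑ p : Fin k × Fin k', ((tgW β β' γ (Sum.inr (Sum.inr p)) : ℝ) / m)
      = ((∑ j : Fin k, ∑ j' : Fin k', γ j j' : ℕ) : ℝ) / m := by
    rw [← Finset.sum_div]
    congr 1
    rw [Fintype.sum_prod_type,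
      show ((∑ j : Fin k, ∑ j' : Fin k', γ j j' : ℕ) : ℝ)
        = ∑ j : Fin k, ∑ j' : Fin k', ((γ j j' : ℕ) : ℝ) by push_cast; rfl]
    exact Finset.sum_congr rfl fun j _ => Finset.sum_congr rfl fun q _ => by simp [tgW]
  -- restricted product measures
  have hresl : (volume : Measure (Fin k → ℝ)).restrict (Set.univ.pi fun _ => Set.Iic t)
      = Measure.pi (fun _ : Fin k => (volume : Measure ℝ).restrict (Set.Iic t)) := by
    rw [MeasureTheory.volume_pi, pi_restrict_eq _ _ (fun _ => measurableSet_Iic)]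
  have hresr : (volume : Measure (Fin k' → ℝ)).restrict (Set.univ.pi fun _ => Set.Iic t')
      = Measure.pi (fun _ : Fin k' => (volume : Measure ℝ).restrict (Set.Iic t')) := by
    rw [MeasureTheory.volume_pi, pi_restrict_eq _ _ (fun _ => measurableSet_Iic)]
  calc (∫⁻ s in Set.univ.pi (fun _ : Fin k => Set.Iic t),
      ∫⁻ s' in Set.univ.pi (fun _ : Fin k' => Set.Iic t'),
        (∏ j, x (t - s j)) * (∏ j', x (t' - s' j')) *
        ENNReal.ofReal
          ((∏ j : Fin k, ∏ q ∈ univ.filter (fun q => q < j),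
              |s j - s q| ^ ((β j q : ℝ) * (2*H0 - 2)))
            * (∏ j' : Fin k', ∏ q' ∈ univ.filter (fun q' => q' < j'),
                |s' j' - s' q'| ^ ((β' j' q' : ℝ) * (2*H0 - 2)))
            * (∏ j : Fin k, ∏ j' : Fin k',
                |s j - s' j'| ^ ((γ j j' : ℝ) * (2*H0 - 2)))))
      = ∫⁻ p, ((∏ j, x (t - p.1 j)) * (∏ j', x (t' - p.2 j')) *
          ENNReal.ofReal
            ((∏ j : Fin k, ∏ q ∈ univ.filter (fun q => q < j),
                |p.1 j - p.1 q| ^ ((β j q : ℝ) * (2*H0 - 2)))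
              * (∏ j' : Fin k', ∏ q' ∈ univ.filter (fun q' => q' < j'),
                  |p.2 j' - p.2 q'| ^ ((β' j' q' : ℝ) * (2*H0 - 2)))
              * (∏ j : Fin k, ∏ j' : Fin k',
                  |p.1 j - p.2 j'| ^ ((γ j j' : ℝ) * (2*H0 - 2)))))
          ∂ ((Measure.pi (fun _ : Fin k => (volume : Measure ℝ).restrict (Set.Iic t))).prod
            (Measure.pi (fun _ : Fin k' => (volume : Measure ℝ).restrict (Set.Iic t')))) := by
        rw [hresl]
        simp_rw [hresr]
        exact (MeasureTheory.lintegral_prod _ hFmeas.aemeasurable).symm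
    _ = ∫⁻ z, (∏ e : tgE k k', tgF m H0 t t' x e z ^ ((tgW β β' γ e : ℝ) / m))
          ∂ Measure.pi μ := by
        exact ((measurePreserving_sumPiEquivProdPi μ).lintegral_comp hFmeas).symm.trans
          (lintegral_congr fun z => hpoint z)
    _ = (∫⋯∫⁻_Finset.univ,
          (fun z => ∏ e : tgE k k', tgF m H0 t t' x e z ^ ((tgW β β' γ e : ℝ) / m)) ∂μ)
          (fun _ => 0) := lintegral_eq_lmarginal_univ _
    _ ≤ ∏ e : tgE k k', ((∫⋯∫⁻_(tgS e ∩ Finset.univ), tgF m H0 t t' x e ∂μ) (fun _ => 0))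
          ^ ((tgW β β' γ e : ℝ) / m) :=
        finner_ineq μ Finset.univ tgS (tgF m H0 t t' x) (fun e _ => hfmeas e)
          (fun e _ => hdep e) _ (fun e _ => hθnn e) Finset.univ (fun i _ => hdegθ i) _
    _ = pairIntegral m H0 x t t
          ^ (((∑ j : Fin k, ∑ q ∈ univ.filter (fun q => q < j), β j q : ℕ) : ℝ) / m)
        * pairIntegral m H0 x t' t'
          ^ (((∑ j' : Fin k', ∑ q' ∈ univ.filter (fun q' => q' < j'), β' j' q' : ℕ) : ℝ) / m)
        * pairIntegral m H0 x t t'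
          ^ (((∑ j : Fin k, ∑ j' : Fin k', γ j j' : ℕ) : ℝ) / m) := by
        rw [Fintype.prod_sum_type, Fintype.prod_sum_type]
        rw [Finset.prod_congr rfl fun p _ => hfac1 p,
          Finset.prod_congr rfl fun p _ => hfac2 p,
          Finset.prod_congr rfl fun p _ => hfac3 p,
          prod_rpow_sum _ _ _ (fun p _ => hθnn (Sum.inl p)),
          prod_rpow_sum _ _ _ (fun p _ => hθnn (Sum.inr (Sum.inl p))),
          prod_rpow_sum _ _ _ (fun p _ => hθnn (Sum.inr (Sum.inr p))),
          hsum1, hsum2, hsum3, mul_assoc]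
end

section
/- Let β > 1, C ≥ 0, and let R : ℝ → ℝ be measurable with |R(u)| ≤ C · min(1, |u|^{−β}) for all u ∈ ℝ. Then R ∈ L¹(ℝ), and for all T, T' ≥ 0: lim_{ε → 0+} ε ∫_0^{T/ε} ∫_0^{T'/ε} R(t−t') dt' dt = min(T, T') · ∫_ℝ R(u) du. -/
open MeasureTheory Real Filter intervalIntegral

lemma covlim_aux_integrable {β : ℝ} (hβ : 1 < β) :
    Integrable (fun u : ℝ => min 1 (|u| ^ (-β))) := by
  have hmeas : Measurable fun u : ℝ => min 1 (|u| ^ (-β)) := by measurability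
  have hnonneg : ∀ u : ℝ, 0 ≤ min 1 (|u| ^ (-β)) := fun u =>
    le_min zero_le_one (Real.rpow_nonneg (abs_nonneg u) _)
  have hIoi : IntegrableOn (fun u : ℝ => min 1 (|u| ^ (-β))) (Set.Ioi 0) := by
    have h1 : IntegrableOn (fun u : ℝ => min 1 (|u| ^ (-β))) (Set.Ioc 0 1) := by
      refine Integrable.mono' (g := fun _ => (1:ℝ)) ?_ hmeas.aestronglyMeasurable ?_
      · exact integrableOn_const (by simp [Real.volume_Ioc])
      · refine ae_of_all _ fun u => ?_
        rw [Real.norm_eq_abs, abs_of_nonneg (hnonneg u)]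
        exact min_le_left _ _
    have h2 : IntegrableOn (fun u : ℝ => min 1 (|u| ^ (-β))) (Set.Ioi 1) := by
      refine Integrable.mono' (g := fun u : ℝ => u ^ (-β))
        (integrableOn_Ioi_rpow_of_lt (by linarith) one_pos) hmeas.aestronglyMeasurable ?_
      refine (ae_restrict_iff' measurableSet_Ioi).mpr (ae_of_all _ fun u hu => ?_)
      rw [Real.norm_eq_abs, abs_of_nonneg (hnonneg u),
        abs_of_nonneg (by linarith [Set.mem_Ioi.mp hu] : (0:ℝ) ≤ u)]
      exact min_le_right _ _
    have := h1.union h2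
    rwa [Set.Ioc_union_Ioi_eq_Ioi (zero_le_one)] at this
  have hIic : IntegrableOn (fun u : ℝ => min 1 (|u| ^ (-β))) (Set.Iic 0) := by
    rw [IntegrableOn, ← Measure.map_neg_eq_self (volume : Measure ℝ)]
    have m : MeasurableEmbedding fun x : ℝ => -x :=
      (Homeomorph.neg ℝ).measurableEmbedding
    rw [m.restrict_map, m.integrable_map_iff]
    simp only [Function.comp_def, abs_neg, Set.neg_preimage, Set.neg_Iic, neg_zero]
    exact Iff.mpr integrableOn_Ici_iff_integrableOn_Ioi hIoi
  have := hIic.union hIoi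
  rwa [Set.Iic_union_Ioi, integrableOn_univ] at this

lemma covlim_key_identity (R : ℝ → ℝ) (hR : Measurable R) (hRint : Integrable R)
    {S S' : ℝ} (hS : 0 ≤ S) (hS' : 0 ≤ S') :
    (∫ t in (0:ℝ)..S, ∫ t' in (0:ℝ)..S', R (t - t')) =
      ∫ u, max (min (u + S') S - max u 0) 0 * R u := by
  set A : Set (ℝ × ℝ) := {p | p.1 - S' < p.2 ∧ p.2 ≤ p.1} with hA
  have hAmeas : MeasurableSet A :=
    (measurableSet_lt (measurable_fst.sub measurable_const) measurable_snd).inter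
      (measurableSet_le measurable_snd measurable_fst)
  set F : ℝ × ℝ → ℝ := A.indicator (fun p => R p.2) with hF
  have hFmeas : Measurable F := (hR.comp measurable_snd).indicator hAmeas
  have hFrow : ∀ t : ℝ, (fun u => F (t, u)) = (Set.Ioc (t - S') t).indicator R := by
    intro t
    funext u
    simp [hF, Set.indicator_apply, hA, Set.mem_Ioc]
  have hFcol : ∀ u : ℝ, (fun t => F (t, u)) =
      (Set.Ico u (u + S')).indicator (fun _ => R u) := by
    intro u
    funext t
    simp only [hF, Set.indicator_apply, hA, Set.mem_setOf_eq, Set.mem_Ico]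
    congr 1
    simp only [eq_iff_iff]
    constructor
    · rintro ⟨h1, h2⟩; exact ⟨h2, by linarith⟩
    · rintro ⟨h1, h2⟩; exact ⟨by linarith, h1⟩
  have hFrowInt : ∀ t : ℝ, Integrable (fun u => F (t, u)) := by
    intro t
    rw [hFrow t]
    exact hRint.indicator measurableSet_Ioc
  have hFint : Integrable F ((volume.restrict (Set.Ioc 0 S)).prod volume) := by
    refine (integrable_prod_iff hFmeas.aestronglyMeasurable).mpr ⟨?_, ?_⟩
    · exact ae_of_all _ hFrowInt
    · refine Integrable.mono' (g := fun _ => ∫ u, ‖R u‖) (integrable_const _)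
        ((hFmeas.norm.stronglyMeasurable.integral_prod_right').aestronglyMeasurable.restrict) ?_
      refine ae_of_all _ fun t => ?_
      rw [Real.norm_eq_abs, abs_of_nonneg (integral_nonneg fun u => norm_nonneg _)]
      refine integral_mono (hFrowInt t).norm hRint.norm fun u => ?_
      exact norm_indicator_le_norm_self (fun p : ℝ × ℝ => R p.2) (t, u)
  have hinner : ∀ t : ℝ, (∫ t' in (0:ℝ)..S', R (t - t')) = ∫ u, F (t, u) := by
    intro t
    rw [intervalIntegral.integral_comp_sub_left (fun u => R u) t, sub_zero,
      intervalIntegral.integral_of_le (by linarith), ← MeasureTheory.integral_indicator measurableSet_Ioc]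
    rw [hFrow t]
  calc (∫ t in (0:ℝ)..S, ∫ t' in (0:ℝ)..S', R (t - t'))
      = ∫ t in Set.Ioc (0:ℝ) S, ∫ u, F (t, u) := by
        rw [intervalIntegral.integral_of_le hS]
        exact setIntegral_congr_fun measurableSet_Ioc fun t _ => hinner t
    _ = ∫ u, ∫ t in Set.Ioc (0:ℝ) S, F (t, u) :=
        integral_integral_swap (f := fun t u => F (t, u)) hFint
    _ = ∫ u, max (min (u + S') S - max u 0) 0 * R u := by
        refine integral_congr_ae (ae_of_all _ fun u => ?_)
        dsimp only
        rw [hFcol u, MeasureTheory.integral_indicator measurableSet_Ico, setIntegral_const,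
          measureReal_restrict_apply measurableSet_Ico, measureReal_def]
        have hvol : volume (Set.Ico u (u + S') ∩ Set.Ioc 0 S) =
            ENNReal.ofReal (min (u + S') S - max u 0) := by
          refine le_antisymm ?_ ?_
          · calc volume (Set.Ico u (u + S') ∩ Set.Ioc 0 S)
                ≤ volume (Set.Icc (max u 0) (min (u + S') S)) := by
                  refine measure_mono ?_
                  rintro t ⟨⟨h1, h2⟩, h3, h4⟩
                  exact ⟨max_le h1 h3.le, le_min h2.le h4⟩
              _ = ENNReal.ofReal (min (u + S') S - max u 0) := Real.volume_Icc
          · calc ENNReal.ofReal (min (u + S') S - max u 0)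
                = volume (Set.Ioo (max u 0) (min (u + S') S)) := Real.volume_Ioo.symm
              _ ≤ volume (Set.Ico u (u + S') ∩ Set.Ioc 0 S) := by
                  refine measure_mono ?_
                  rintro t ⟨h1, h2⟩
                  have hu : u ≤ t := ((le_max_left u 0).trans_lt h1).le
                  have h0 : 0 < t := (le_max_right u 0).trans_lt h1
                  exact ⟨⟨hu, h2.trans_le (min_le_left _ _)⟩, h0,
                    h2.le.trans (min_le_right _ _)⟩
        rw [hvol, ENNReal.toReal_ofReal', smul_eq_mul]

/-- Convergence of covariances (Lemma 4.9 of the paper): if `R` is measurable with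
`|R(u)| ≤ C·min(1,|u|^(−β))` (read as `C` at `u = 0`) for some `β > 1`, then `R ∈ L¹(ℝ)`
and for all `T, T' ≥ 0`,
`ε ∫_0^{T/ε} ∫_0^{T'/ε} R(t−t') dt' dt → min(T,T') ∫_ℝ R(u) du` as `ε → 0⁺`. -/
theorem covariance_limit (β : ℝ) (hβ : 1 < β) (C : ℝ) (hC : 0 ≤ C)
    (R : ℝ → ℝ) (hR : Measurable R)
    (hbound : ∀ u : ℝ, |R u| ≤ C * (if u = 0 then 1 else min 1 (|u| ^ (-β)))) :
    Integrable R ∧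
    ∀ T T' : ℝ, 0 ≤ T → 0 ≤ T' →
      Tendsto (fun ε : ℝ =>
          ε * ∫ t in (0:ℝ)..(T/ε), ∫ t' in (0:ℝ)..(T'/ε), R (t - t'))
        (nhdsWithin 0 (Set.Ioi 0))
        (nhds (min T T' * ∫ u : ℝ, R u)) := by
  have hRint : Integrable R := by
    have h0 : ∀ᵐ u : ℝ, u ≠ 0 := by
      rw [ae_iff]
      simp only [ne_eq, not_not]
      exact Real.volume_singleton (a := 0)
    refine Integrable.mono' ((covlim_aux_integrable hβ).const_mul C)
      hR.aestronglyMeasurable ?_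
    filter_upwards [h0] with u hu
    have := hbound u
    rw [if_neg hu] at this
    rwa [Real.norm_eq_abs]
  refine ⟨hRint, fun T T' hT hT' => ?_⟩
  set G : ℝ → ℝ → ℝ := fun ε u => max (min (ε * u + T') T - ε * max u 0) 0 with hG
  have hmTT' : 0 ≤ min T T' := le_min hT hT'
  have hGbounds : ∀ ε : ℝ, 0 < ε → ∀ u : ℝ, 0 ≤ G ε u ∧ G ε u ≤ min T T' := by
    intro ε hε u
    refine ⟨le_max_right _ _, max_le (le_min ?_ ?_) hmTT'⟩
    · have h1 : min (ε * u + T') T ≤ T := min_le_right _ _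
      have h2 : 0 ≤ ε * max u 0 := mul_nonneg hε.le (le_max_right u 0)
      linarith
    · have h1 : min (ε * u + T') T ≤ ε * u + T' := min_le_left _ _
      have h2 : ε * u ≤ ε * max u 0 := mul_le_mul_of_nonneg_left (le_max_left u 0) hε.le
      linarith
  have hId : ∀ ε : ℝ, 0 < ε →
      ε * (∫ t in (0:ℝ)..(T/ε), ∫ t' in (0:ℝ)..(T'/ε), R (t - t')) = ∫ u, G ε u * R u := by
    intro ε hε
    rw [covlim_key_identity R hR hRint (div_nonneg hT hε.le) (div_nonneg hT' hε.le),
      ← MeasureTheory.integral_const_mul]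
    refine integral_congr_ae (ae_of_all _ fun u => ?_)
    dsimp only
    rw [← mul_assoc]
    congr 1
    rw [mul_max_of_nonneg _ _ hε.le, mul_zero, mul_sub,
      mul_min_of_nonneg _ _ hε.le, mul_add, mul_div_cancel₀ _ hε.ne', mul_div_cancel₀ _ hε.ne']
  have hmain : Tendsto (fun ε : ℝ => ∫ u, G ε u * R u)
      (nhdsWithin 0 (Set.Ioi 0)) (nhds (min T T' * ∫ u : ℝ, R u)) := by
    rw [← MeasureTheory.integral_const_mul]
    refine tendsto_integral_filter_of_dominated_convergence
      (bound := fun u => min T T' * ‖R u‖) ?_ ?_ (hRint.norm.const_mul _) ?_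
    · refine Eventually.of_forall fun ε => ?_
      have hcont : Continuous fun u : ℝ => G ε u := by
        apply Continuous.max _ continuous_const
        exact (((continuous_const.mul continuous_id).add continuous_const).min
          continuous_const).sub (continuous_const.mul
            (continuous_id.max continuous_const))
      exact (hcont.measurable.mul hR).aestronglyMeasurable
    · filter_upwards [eventually_mem_nhdsWithin] with ε hε
      refine ae_of_all _ fun u => ?_
      obtain ⟨h1, h2⟩ := hGbounds ε hε u
      rw [Real.norm_eq_abs, abs_mul, abs_of_nonneg h1, ← Real.norm_eq_abs (R u)]
      exact mul_le_mul_of_nonneg_right h2 (norm_nonneg _)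
    · refine ae_of_all _ fun u => ?_
      have hcont : Continuous fun ε : ℝ => G ε u * R u := by
        apply Continuous.mul _ continuous_const
        apply Continuous.max _ continuous_const
        exact (((continuous_mul_right u).add continuous_const).min
          continuous_const).sub ((continuous_id.mul continuous_const))
      have h0 : G 0 u * R u = min T T' * R u := by
        simp only [hG, zero_mul, zero_add, sub_zero]
        rw [max_eq_left (le_min hT' hT), min_comm]
      have := (hcont.tendsto 0).mono_left (nhdsWithin_le_nhds (s := Set.Ioi (0:ℝ)))
      rwa [h0] at this
  refine hmain.congr' ?_
  filter_upwards [eventually_mem_nhdsWithin] with ε hε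
  exact (hId ε hε).symm
end

section
/- Let d ≥ 2 be an integer, p ∈ {1,…,d−1}, and β > 0 with βd > 1. Let B₁₃, B₁₄, B₂₃, B₂₄ be nonnegative integers with B₁₃ + B₁₄ = d−p and B₂₃ + B₂₄ = d−p. With ρ(s) = min(1, |s|^{−β}) (interpreted as 1 at s = 0), one has lim_{L → ∞} L^{−2} ∫_{[0,L]^4} ρ(t₁−t₂)^p · ρ(t₃−t₄)^p · ρ(t₁−t₃)^{B₁₃} · ρ(t₁−t₄)^{B₁₄} · ρ(t₂−t₃)^{B₂₃} · ρ(t₂−t₄)^{B₂₄} dt₁ dt₂ dt₃ dt₄ = 0. -/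
open MeasureTheory Real Filter intervalIntegral

open MeasureTheory Real Filter intervalIntegral Set ENNReal

noncomputable def rho (β s : ℝ) : ℝ := if s = 0 then 1 else min 1 (|s| ^ (-β))

lemma rho_nonneg (β s : ℝ) : 0 ≤ rho β s := by
  unfold rho; split
  · norm_num
  · exact le_min zero_le_one (Real.rpow_nonneg (abs_nonneg _) _)

lemma rho_le_one (β s : ℝ) : rho β s ≤ 1 := by
  unfold rho; split
  · exact le_refl _
  · exact min_le_left _ _

lemma rho_comm (β x y : ℝ) : rho β (x - y) = rho β (y - x) := by
  by_cases h : x = y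
  · simp [rho, h]
  · rw [rho, rho, if_neg (sub_ne_zero.2 h), if_neg (sub_ne_zero.2 (Ne.symm h)), abs_sub_comm]

lemma measurable_abs_rpow (c : ℝ) (hc : c ≠ 0) :
    Measurable (fun s : ℝ => |s| ^ c) := by
  have h : (fun s : ℝ => |s| ^ c) =
      fun s : ℝ => if s = 0 then 0 else Real.exp (Real.log |s| * c) := by
    funext s
    by_cases hs : s = 0
    · simp [hs, Real.zero_rpow hc]
    · rw [if_neg hs, Real.rpow_def_of_pos (abs_pos.2 hs)]
  rw [h]
  exact Measurable.ite (by simpa using (MeasurableSet.singleton (0:ℝ))) measurable_const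
    (Real.measurable_exp.comp ((Real.measurable_log.comp measurable_abs).mul measurable_const))

lemma measurable_rho (β : ℝ) (hβ : β ≠ 0) : Measurable (rho β) := by
  unfold rho
  exact Measurable.ite (by simpa using (MeasurableSet.singleton (0:ℝ))) measurable_const
    (measurable_const.min (measurable_abs_rpow _ (neg_ne_zero.2 hβ)))

lemma rho_eq (β x y : ℝ) : (if x = y then (1:ℝ) else min 1 (|x - y| ^ (-β))) = rho β (x - y) :=
  ((if_congr sub_eq_zero rfl rfl).symm : _)

noncomputable def psi (c s : ℝ) : ℝ := min 1 (|s| ^ (-c))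

lemma psi_nonneg (c s : ℝ) : 0 ≤ psi c s :=
  le_min zero_le_one (Real.rpow_nonneg (abs_nonneg _) _)

lemma psi_le_one (c s : ℝ) : psi c s ≤ 1 := min_le_left _ _

lemma measurable_psi (c : ℝ) (hc : c ≠ 0) : Measurable (psi c) :=
  measurable_const.min (measurable_abs_rpow _ (neg_ne_zero.2 hc))

-- pointwise pow bound
lemma rho_pow_le_psi {β : ℝ} (k : ℕ) (c : ℝ) (hc0 : 0 < c) (hck : c ≤ β * k)
    {s : ℝ} (hs : s ≠ 0) : rho β s ^ k ≤ psi c s := by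
  unfold rho
  rw [if_neg hs]
  have habs : (0:ℝ) < |s| := abs_pos.2 hs
  have h1 : min 1 (|s| ^ (-β)) ^ k ≤ min 1 ((|s| ^ (-β)) ^ k) := by
    refine le_min (pow_le_one₀ (le_min zero_le_one (Real.rpow_nonneg (abs_nonneg _) _)) (min_le_left _ _)) ?_
    exact pow_le_pow_left₀ (le_min zero_le_one (Real.rpow_nonneg (abs_nonneg _) _)) (min_le_right _ _) k
  refine h1.trans ?_
  have h2 : (|s| ^ (-β)) ^ k = |s| ^ (-(β * k)) := by
    rw [← Real.rpow_natCast (|s| ^ (-β)) k, ← Real.rpow_mul (abs_nonneg s)]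
    ring_nf
  rw [h2]
  unfold psi
  rcases le_or_gt 1 |s| with h | h
  · exact min_le_min le_rfl (Real.rpow_le_rpow_of_exponent_le h (by linarith))
  · have : (1:ℝ) ≤ |s| ^ (-c) :=
      Real.one_le_rpow_of_pos_of_le_one_of_nonpos habs h.le (by linarith)
    rw [min_eq_left this]
    exact min_le_left _ _

-- x^m * y^n ≤ x^(m+n) + y^(m+n) for 0 ≤ x, y
lemma pow_mul_pow_le (x y : ℝ) (hx : 0 ≤ x) (hy : 0 ≤ y) (m n : ℕ) :
    x ^ m * y ^ n ≤ x ^ (m + n) + y ^ (m + n) := by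
  rcases le_total x y with h | h
  · calc x ^ m * y ^ n ≤ y ^ m * y ^ n :=
          mul_le_mul_of_nonneg_right (pow_le_pow_left₀ hx h m) (pow_nonneg hy n)
      _ = y ^ (m + n) := by rw [pow_add]
      _ ≤ x ^ (m + n) + y ^ (m + n) := le_add_of_nonneg_left (pow_nonneg hx _)
  · calc x ^ m * y ^ n ≤ x ^ m * x ^ n :=
          mul_le_mul_of_nonneg_left (pow_le_pow_left₀ hy h n) (pow_nonneg hx m)
      _ = x ^ (m + n) := by rw [pow_add]
      _ ≤ x ^ (m + n) + y ^ (m + n) := le_add_of_nonneg_right (pow_nonneg hy _)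

lemma one_le_two_rpow {β : ℝ} (hβ : 0 < β) : (1:ℝ) ≤ (2:ℝ) ^ β := by
  calc (1:ℝ) = (2:ℝ) ^ (0:ℝ) := (Real.rpow_zero 2).symm
    _ ≤ 2 ^ β := Real.rpow_le_rpow_of_exponent_le one_le_two hβ.le

-- if |z|/2 ≤ |x| and z ≠ 0 then rho x ≤ 2^β rho z
lemma rho_half (β : ℝ) (hβ : 0 < β) (x z : ℝ) (hz : z ≠ 0) (h : |z| / 2 ≤ |x|) :
    rho β x ≤ 2 ^ β * rho β z := by
  have hx : x ≠ 0 := by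
    intro h0
    rw [h0, abs_zero] at h
    have := abs_pos.2 hz
    linarith
  have hzpos : (0:ℝ) < |z| := abs_pos.2 hz
  rw [rho, rho, if_neg hx, if_neg hz]
  have key : |x| ^ (-β) ≤ 2 ^ β * |z| ^ (-β) := by
    have h1 : (|z| / 2) ^ β ≤ |x| ^ β := Real.rpow_le_rpow (by positivity) h hβ.le
    have h2 : (|x| ^ β)⁻¹ ≤ ((|z| / 2) ^ β)⁻¹ := by
      apply inv_anti₀ _ h1
      positivity
    have h3 : ((|z| / 2) ^ β)⁻¹ = 2 ^ β * (|z| ^ β)⁻¹ := by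
      rw [Real.div_rpow (abs_nonneg z) (by norm_num : (0:ℝ) ≤ 2)]
      field_simp
    rw [Real.rpow_neg (abs_nonneg x), Real.rpow_neg (abs_nonneg z)]
    exact h2.trans_eq h3
  calc min 1 (|x| ^ (-β)) ≤ min (2 ^ β * 1) (2 ^ β * (|z| ^ (-β))) :=
        min_le_min (by linarith [one_le_two_rpow hβ]) key
    _ = 2 ^ β * min 1 (|z| ^ (-β)) := (mul_min_of_nonneg _ _ (by positivity)).symm

-- triangle: min (rho x) (rho y) ≤ 2^β * rho (x+y)
lemma rho_min_le (β : ℝ) (hβ : 0 < β) (x y : ℝ) :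
    min (rho β x) (rho β y) ≤ 2 ^ β * rho β (x + y) := by
  by_cases hz : x + y = 0
  · rw [hz]
    have : rho β 0 = 1 := by simp [rho]
    rw [this, mul_one]
    exact le_trans (min_le_left _ _) (le_trans (rho_le_one β x) (one_le_two_rpow hβ))
  · have habs : |x + y| ≤ |x| + |y| := abs_add_le x y
    rcases le_total (|x + y| / 2) |x| with h | h
    · exact le_trans (min_le_left _ _) (rho_half β hβ x (x+y) hz h)
    · have hy : |x + y| / 2 ≤ |y| := by
        by_contra hcon
        push_neg at hcon
        have : |x| + |y| < |x + y| := by linarith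
        linarith
      exact le_trans (min_le_right _ _) (rho_half β hβ y (x+y) hz hy)

-- full triangle with max
lemma rho_mul_le (β : ℝ) (hβ : 0 < β) (x y : ℝ) :
    rho β x * rho β y ≤ (2 ^ β * rho β (x + y)) * max (rho β x) (rho β y) := by
  rw [← min_mul_max (rho β x) (rho β y)]
  exact mul_le_mul_of_nonneg_right (rho_min_le β hβ x y)
    (le_max_of_le_left (rho_nonneg β x) |> fun h => h) |>.trans_eq rfl

lemma rho_pow_mul_le (β : ℝ) (hβ : 0 < β) (x y : ℝ) (q : ℕ) :
    rho β x ^ q * rho β y ^ q ≤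
      (2 ^ β) ^ q * rho β (x + y) ^ q * (rho β x ^ q + rho β y ^ q) := by
  have h0 : rho β x * rho β y ≤ (2 ^ β * rho β (x + y)) * max (rho β x) (rho β y) :=
    rho_mul_le β hβ x y
  have h1 : (rho β x * rho β y) ^ q ≤ ((2 ^ β * rho β (x + y)) * max (rho β x) (rho β y)) ^ q :=
    pow_le_pow_left₀ (mul_nonneg (rho_nonneg _ _) (rho_nonneg _ _)) h0 q
  calc rho β x ^ q * rho β y ^ q = (rho β x * rho β y) ^ q := (mul_pow _ _ _).symm
    _ ≤ ((2 ^ β * rho β (x + y)) * max (rho β x) (rho β y)) ^ q := h1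
    _ = (2 ^ β) ^ q * rho β (x + y) ^ q * max (rho β x) (rho β y) ^ q := by
        rw [mul_pow, mul_pow]
    _ ≤ (2 ^ β) ^ q * rho β (x + y) ^ q * (rho β x ^ q + rho β y ^ q) := by
        apply mul_le_mul_of_nonneg_left _
          (mul_nonneg (pow_nonneg (Real.rpow_nonneg (by norm_num) _) q)
            (pow_nonneg (rho_nonneg _ _) q))
        rcases max_cases (rho β x) (rho β y) with ⟨h, _⟩ | ⟨h, _⟩ <;> rw [h]
        · exact le_add_of_nonneg_right (pow_nonneg (rho_nonneg _ _) q)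
        · exact le_add_of_nonneg_left (pow_nonneg (rho_nonneg _ _) q)


lemma II_bdd {f : ℝ → ℝ} (hm : Measurable f) (h0 : ∀ t, 0 ≤ f t) (h1 : ∀ t, f t ≤ 1)
    (a b : ℝ) : IntervalIntegrable f volume a b := by
  rw [intervalIntegrable_iff]
  haveI : IsFiniteMeasure (volume.restrict (uIoc a b)) := by
    constructor
    rw [Measure.restrict_apply_univ]
    exact measure_Ioc_lt_top
  apply Integrable.mono' (integrable_const 1) hm.aestronglyMeasurable
  filter_upwards with t
  rw [Real.norm_eq_abs, abs_of_nonneg (h0 t)]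
  exact h1 t

lemma psi_int_bound (c L x : ℝ) (hc0 : 0 < c) (hc1 : c < 1) (hL : 1 ≤ L)
    (hx : x ∈ Icc (0:ℝ) L) :
    ∫ t in Ioc (0:ℝ) L, psi c (x - t) ≤ (2 + 2/(1-c)) * L ^ (1-c) := by
  have hL0 : (0:ℝ) ≤ L := le_trans zero_le_one hL
  have hcne : c ≠ 0 := ne_of_gt hc0
  have hpsiI : ∀ a b : ℝ, IntervalIntegrable (fun u => psi c u) volume a b :=
    II_bdd (measurable_psi c hcne) (psi_nonneg c) (psi_le_one c)
  have step0 : ∫ t in Ioc (0:ℝ) L, psi c (x - t) = ∫ t in (0:ℝ)..L, psi c (t - x) := by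
    rw [intervalIntegral.integral_of_le hL0]
    congr 1
    funext t
    unfold psi
    rw [abs_sub_comm]
  rw [step0, intervalIntegral.integral_comp_sub_right (fun u => psi c u) x]
  have step1 : ∫ u in (0:ℝ)-x..L-x, psi c u ≤ ∫ u in (-L)..L, psi c u := by
    apply intervalIntegral.integral_mono_interval (by simp; linarith [hx.2]) (by linarith)
      (by linarith [hx.1])
    · filter_upwards with u using psi_nonneg c u
    · exact hpsiI _ _
  refine step1.trans ?_
  have split : ∫ u in (-L)..L, psi c u = (∫ u in (-L)..(0:ℝ), psi c u) + ∫ u in (0:ℝ)..L, psi c u :=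
    (intervalIntegral.integral_add_adjacent_intervals (hpsiI _ _) (hpsiI _ _)).symm
  have neg_eq : ∫ u in (-L)..(0:ℝ), psi c u = ∫ u in (0:ℝ)..L, psi c u := by
    have : ∫ u in (0:ℝ)..L, psi c (-u) = ∫ u in (-L)..(0:ℝ), psi c u := by
      simpa using intervalIntegral.integral_comp_neg (a := (0:ℝ)) (b := L) (fun u => psi c u)
    rw [← this]
    congr 1
    funext u
    unfold psi
    rw [abs_neg]
  have half : ∫ u in (0:ℝ)..L, psi c u ≤ 1 + L ^ (1-c) / (1-c) := by
    have splitL : ∫ u in (0:ℝ)..L, psi c u =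
        (∫ u in (0:ℝ)..(1:ℝ), psi c u) + ∫ u in (1:ℝ)..L, psi c u :=
      (intervalIntegral.integral_add_adjacent_intervals (hpsiI _ _) (hpsiI _ _)).symm
    have h01 : ∫ u in (0:ℝ)..(1:ℝ), psi c u ≤ 1 := by
      have := intervalIntegral.integral_mono_on zero_le_one (hpsiI 0 1)
        (_root_.intervalIntegrable_const (c := (1:ℝ))) (fun u _ => psi_le_one c u)
      simpa using this
    have h1L : ∫ u in (1:ℝ)..L, psi c u ≤ L ^ (1-c) / (1-c) := by
      have hcont : IntervalIntegrable (fun u : ℝ => u ^ (-c)) volume 1 L := by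
        apply ContinuousOn.intervalIntegrable
        intro u hu
        have hu1 : (1:ℝ) ≤ u := by
          rcases hu with ⟨h, _⟩
          simpa [min_eq_left hL] using h
        exact (Real.continuousAt_rpow_const u (-c) (Or.inl (by linarith))).continuousWithinAt
      have hmono : ∫ u in (1:ℝ)..L, psi c u ≤ ∫ u in (1:ℝ)..L, u ^ (-c) := by
        apply intervalIntegral.integral_mono_on hL (hpsiI _ _) hcont
        intro u hu
        calc psi c u ≤ |u| ^ (-c) := min_le_right _ _
          _ = u ^ (-c) := by rw [abs_of_pos (by linarith [hu.1])]
      have hval : ∫ u in (1:ℝ)..L, u ^ (-c) = (L ^ (1-c) - 1) / (1-c) := by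
        rw [integral_rpow (Or.inl (by linarith))]
        norm_num
        rw [show -c + 1 = 1 - c by ring]
      refine hmono.trans ?_
      rw [hval]
      apply div_le_div_of_nonneg_right ?_ (by linarith)
      exact sub_le_self _ zero_le_one
    linarith
  have hpow1 : (1:ℝ) ≤ L ^ (1-c) := by
    calc (1:ℝ) = L ^ (0:ℝ) := (Real.rpow_zero L).symm
      _ ≤ L ^ (1-c) := Real.rpow_le_rpow_of_exponent_le hL (by linarith)
  calc (∫ u in (-L)..L, psi c u) = _ + _ := split
    _ ≤ (1 + L ^ (1-c) / (1-c)) + (1 + L ^ (1-c) / (1-c)) := by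
        rw [neg_eq]; linarith
    _ ≤ (2 + 2/(1-c)) * L ^ (1-c) := by
        have hD : L ^ (1-c) / (1-c) = L ^ (1-c) * (1/(1-c)) := by ring
        have hkey : (2 + 2/(1-c)) * L ^ (1-c)
            = 2 * L ^ (1-c) + 2 * (L ^ (1-c) * (1/(1-c))) := by ring
        rw [hD, hkey]
        have hDpos : (0:ℝ) ≤ 1/(1-c) := le_of_lt (by apply div_pos one_pos; linarith)
        nlinarith [hpow1, hDpos]


lemma lint_rho_bound {β : ℝ} (k : ℕ) (c L x : ℝ) (hc0 : 0 < c) (hc1 : c < 1)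
    (hck : c ≤ β * k) (hL : 1 ≤ L) (hx : x ∈ Icc (0:ℝ) L) :
    ∫⁻ t in Ioc (0:ℝ) L, ENNReal.ofReal (rho β (x - t) ^ k)
      ≤ ENNReal.ofReal ((2 + 2/(1-c)) * L ^ (1-c)) := by
  have hcne : c ≠ 0 := ne_of_gt hc0
  have hae : ∀ᵐ (t:ℝ), t ≠ x := by
    rw [ae_iff]
    have : {t : ℝ | ¬ t ≠ x} = {x} := by ext t; simp
    rw [this]
    exact measure_singleton x
  have mono : ∫⁻ t in Ioc (0:ℝ) L, ENNReal.ofReal (rho β (x - t) ^ k)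
      ≤ ∫⁻ t in Ioc (0:ℝ) L, ENNReal.ofReal (psi c (x - t)) := by
    apply lintegral_mono_ae
    filter_upwards [ae_restrict_of_ae hae] with t ht
    exact ENNReal.ofReal_le_ofReal
      (rho_pow_le_psi k c hc0 hck (sub_ne_zero.2 (Ne.symm ht)))
  refine mono.trans ?_
  have hint : IntegrableOn (fun t => psi c (x - t)) (Ioc (0:ℝ) L) volume := by
    have := II_bdd (f := fun t => psi c (x - t))
      ((measurable_psi c hcne).comp (measurable_const.sub measurable_id))
      (fun t => psi_nonneg _ _) (fun t => psi_le_one _ _) 0 L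
    rw [intervalIntegrable_iff, uIoc_of_le (by linarith : (0:ℝ) ≤ L)] at this
    exact this
  rw [← ofReal_integral_eq_lintegral_ofReal hint
    (Filter.Eventually.of_forall (fun t => psi_nonneg _ _))]
  exact ENNReal.ofReal_le_ofReal (psi_int_bound c L x hc0 hc1 hL hx)

lemma lint_rho_bound' {β : ℝ} (k : ℕ) (c L x : ℝ) (hc0 : 0 < c) (hc1 : c < 1)
    (hck : c ≤ β * k) (hL : 1 ≤ L) (hx : x ∈ Icc (0:ℝ) L) :
    ∫⁻ t in Ioc (0:ℝ) L, ENNReal.ofReal (rho β (t - x) ^ k)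
      ≤ ENNReal.ofReal ((2 + 2/(1-c)) * L ^ (1-c)) := by
  have hcomm : ∀ t : ℝ, rho β (t - x) = rho β (x - t) := by
    intro t
    by_cases h : t = x
    · rw [h]
    · rw [rho, rho, if_neg (sub_ne_zero.2 h), if_neg (sub_ne_zero.2 (Ne.symm h)), abs_sub_comm]
  simp_rw [hcomm]
  exact lint_rho_bound k c L x hc0 hc1 hck hL hx


lemma pointwise_chunks {β : ℝ} (hβ : 0 < β) (p q B13 B14 B23 B24 : ℕ)
    (h1 : B13 + B14 = q) (h2 : B23 + B24 = q) (t1 t2 t3 t4 : ℝ) :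
    rho β (t1 - t2) ^ p * rho β (t3 - t4) ^ p * rho β (t1 - t3) ^ B13
        * rho β (t1 - t4) ^ B14 * rho β (t2 - t3) ^ B23 * rho β (t2 - t4) ^ B24
    ≤ ((2:ℝ) ^ β) ^ q * (rho β (t1 - t2) ^ (p + q)
          * (rho β (t1 - t3) ^ q + rho β (t2 - t3) ^ q)) * rho β (t3 - t4) ^ p
      + ((rho β (t1 - t2) ^ p * rho β (t1 - t3) ^ q)
            * (rho β (t3 - t4) ^ p * rho β (t2 - t4) ^ q)
          + (rho β (t1 - t2) ^ p * rho β (t2 - t3) ^ q)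
            * (rho β (t3 - t4) ^ p * rho β (t1 - t4) ^ q))
      + ((2:ℝ) ^ β) ^ q * (rho β (t1 - t2) ^ (p + q))
          * ((rho β (t1 - t4) ^ q + rho β (t2 - t4) ^ q) * rho β (t3 - t4) ^ p) := by
  set r12 := rho β (t1 - t2) with hr12
  set r34 := rho β (t3 - t4) with hr34
  set r13 := rho β (t1 - t3) with hr13
  set r14 := rho β (t1 - t4) with hr14
  set r23 := rho β (t2 - t3) with hr23
  set r24 := rho β (t2 - t4) with hr24
  set W := ((2:ℝ) ^ β) ^ q with hW
  have hWpos : (0:ℝ) ≤ W := pow_nonneg (Real.rpow_nonneg (by norm_num) _) q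
  have n12 : 0 ≤ r12 := rho_nonneg _ _
  have n34 : 0 ≤ r34 := rho_nonneg _ _
  have n13 : 0 ≤ r13 := rho_nonneg _ _
  have n14 : 0 ≤ r14 := rho_nonneg _ _
  have n23 : 0 ≤ r23 := rho_nonneg _ _
  have n24 : 0 ≤ r24 := rho_nonneg _ _
  have hX : r13 ^ B13 * r14 ^ B14 ≤ r13 ^ q + r14 ^ q := by
    rw [← h1]; exact pow_mul_pow_le _ _ n13 n14 _ _
  have hY : r23 ^ B23 * r24 ^ B24 ≤ r23 ^ q + r24 ^ q := by
    rw [← h2]; exact pow_mul_pow_le _ _ n23 n24 _ _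
  have step1 : r12 ^ p * r34 ^ p * r13 ^ B13 * r14 ^ B14 * r23 ^ B23 * r24 ^ B24
      ≤ (r12 ^ p * r34 ^ p) * ((r13 ^ q + r14 ^ q) * (r23 ^ q + r24 ^ q)) := by
    have e : r12 ^ p * r34 ^ p * r13 ^ B13 * r14 ^ B14 * r23 ^ B23 * r24 ^ B24
        = (r12 ^ p * r34 ^ p) * ((r13 ^ B13 * r14 ^ B14) * (r23 ^ B23 * r24 ^ B24)) := by ring
    rw [e]
    apply mul_le_mul_of_nonneg_left _ (by positivity)
    exact mul_le_mul hX hY (by positivity) (by positivity)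
  refine step1.trans ?_
  -- triangle bounds for the (3,3) and (4,4) terms
  have tri33 : r13 ^ q * r23 ^ q ≤ W * r12 ^ q * (r13 ^ q + r23 ^ q) := by
    have h := rho_pow_mul_le β hβ (t1 - t3) (t3 - t2) q
    rw [show t1 - t3 + (t3 - t2) = t1 - t2 by ring] at h
    rw [hr13, hr23, hr12, hW, rho_comm β t2 t3]
    exact h
  have tri44 : r14 ^ q * r24 ^ q ≤ W * r12 ^ q * (r14 ^ q + r24 ^ q) := by
    have h := rho_pow_mul_le β hβ (t1 - t4) (t4 - t2) q
    rw [show t1 - t4 + (t4 - t2) = t1 - t2 by ring] at h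
    rw [hr14, hr24, hr12, hW, rho_comm β t2 t4]
    exact h
  have expand : (r12 ^ p * r34 ^ p) * ((r13 ^ q + r14 ^ q) * (r23 ^ q + r24 ^ q))
      = (r12 ^ p * r34 ^ p) * (r13 ^ q * r23 ^ q)
        + ((r12 ^ p * r13 ^ q) * (r34 ^ p * r24 ^ q)
            + (r12 ^ p * r23 ^ q) * (r34 ^ p * r14 ^ q))
        + (r12 ^ p * r34 ^ p) * (r14 ^ q * r24 ^ q) := by ring
  rw [expand]
  have b33 : (r12 ^ p * r34 ^ p) * (r13 ^ q * r23 ^ q)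
      ≤ W * (r12 ^ (p + q) * (r13 ^ q + r23 ^ q)) * r34 ^ p := by
    calc (r12 ^ p * r34 ^ p) * (r13 ^ q * r23 ^ q)
        ≤ (r12 ^ p * r34 ^ p) * (W * r12 ^ q * (r13 ^ q + r23 ^ q)) :=
          mul_le_mul_of_nonneg_left tri33 (by positivity)
      _ = W * ((r12 ^ p * r12 ^ q) * (r13 ^ q + r23 ^ q)) * r34 ^ p := by ring
      _ = W * (r12 ^ (p + q) * (r13 ^ q + r23 ^ q)) * r34 ^ p := by rw [← pow_add]
  have b44 : (r12 ^ p * r34 ^ p) * (r14 ^ q * r24 ^ q)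
      ≤ W * r12 ^ (p + q) * ((r14 ^ q + r24 ^ q) * r34 ^ p) := by
    calc (r12 ^ p * r34 ^ p) * (r14 ^ q * r24 ^ q)
        ≤ (r12 ^ p * r34 ^ p) * (W * r12 ^ q * (r14 ^ q + r24 ^ q)) :=
          mul_le_mul_of_nonneg_left tri44 (by positivity)
      _ = W * (r12 ^ p * r12 ^ q) * ((r14 ^ q + r24 ^ q) * r34 ^ p) := by ring
      _ = W * r12 ^ (p + q) * ((r14 ^ q + r24 ^ q) * r34 ^ p) := by rw [← pow_add]
  linarith [b33, b44]


lemma key_lint {β : ℝ} (hβ : 0 < β) (p q B13 B14 B23 B24 : ℕ)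
    (h1 : B13 + B14 = q) (h2 : B23 + B24 = q)
    {cp cq cd : ℝ} (hcp0 : 0 < cp) (hcp1 : cp < 1) (hcpβ : cp ≤ β * p)
    (hcq0 : 0 < cq) (hcq1 : cq < 1) (hcqβ : cq ≤ β * q)
    (hcd0 : 0 < cd) (hcd1 : cd < 1) (hcdβ : cd ≤ β * (p + q))
    (L : ℝ) (hL : 1 ≤ L) :
    (∫⁻ t1 in Ioc (0:ℝ) L, ∫⁻ t2 in Ioc (0:ℝ) L, ∫⁻ t3 in Ioc (0:ℝ) L,
        ∫⁻ t4 in Ioc (0:ℝ) L, ENNReal.ofReal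
          (rho β (t1 - t2) ^ p * rho β (t3 - t4) ^ p * rho β (t1 - t3) ^ B13
            * rho β (t1 - t4) ^ B14 * rho β (t2 - t3) ^ B23 * rho β (t2 - t4) ^ B24))
      ≤ ENNReal.ofReal ((4 * (((2:ℝ) ^ β) ^ q + 1)
            * ((2 + 2/(1-cp)) * ((2 + 2/(1-cq)) * (2 + 2/(1-cd)))))
          * (L * (L ^ (1-cp) * (L ^ (1-cq) * L ^ (1-cd))))) := by
  have hβne : β ≠ 0 := ne_of_gt hβ
  have hL0 : (0:ℝ) ≤ L := le_trans zero_le_one hL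
  set W : ℝ := ((2:ℝ) ^ β) ^ q with hW
  have hWnn : (0:ℝ) ≤ W := pow_nonneg (Real.rpow_nonneg (by norm_num) _) q
  set Kp : ℝ := 2 + 2/(1-cp) with hKp
  set Kq : ℝ := 2 + 2/(1-cq) with hKq
  set Kd : ℝ := 2 + 2/(1-cd) with hKd
  have hKpnn : (0:ℝ) ≤ Kp := by
    have : (0:ℝ) ≤ 2/(1-cp) := le_of_lt (div_pos two_pos (by linarith))
    simp only [hKp]; linarith
  have hKqnn : (0:ℝ) ≤ Kq := by
    have : (0:ℝ) ≤ 2/(1-cq) := le_of_lt (div_pos two_pos (by linarith))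
    simp only [hKq]; linarith
  have hKdnn : (0:ℝ) ≤ Kd := by
    have : (0:ℝ) ≤ 2/(1-cd) := le_of_lt (div_pos two_pos (by linarith))
    simp only [hKd]; linarith
  have hLp : (0:ℝ) ≤ L ^ (1-cp) := Real.rpow_nonneg hL0 _
  have hLq : (0:ℝ) ≤ L ^ (1-cq) := Real.rpow_nonneg hL0 _
  have hLd : (0:ℝ) ≤ L ^ (1-cd) := Real.rpow_nonneg hL0 _
  set Ap : ℝ≥0∞ := ENNReal.ofReal (Kp * L ^ (1-cp)) with hAp
  set Aq : ℝ≥0∞ := ENNReal.ofReal (Kq * L ^ (1-cq)) with hAq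
  set Ad : ℝ≥0∞ := ENNReal.ofReal (Kd * L ^ (1-cd)) with hAd
  set W' : ℝ≥0∞ := ENNReal.ofReal W with hW'
  have hW'ne : W' ≠ ⊤ := by rw [hW']; exact ENNReal.ofReal_ne_top
  have hApne : Ap ≠ ⊤ := by rw [hAp]; exact ENNReal.ofReal_ne_top
  have hAqne : Aq ≠ ⊤ := by rw [hAq]; exact ENNReal.ofReal_ne_top
  have hAdne : Ad ≠ ⊤ := by rw [hAd]; exact ENNReal.ofReal_ne_top
  -- abbreviations for the rho-powers as real numbers
  -- measurability helpers
  have mrho : Measurable (rho β) := measurable_rho β hβne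
  have m1 : ∀ (a : ℝ) (k : ℕ), Measurable (fun t : ℝ => ENNReal.ofReal (rho β (a - t) ^ k)) :=
    fun a k => (((mrho.comp (measurable_const.sub measurable_id)).pow_const k)).ennreal_ofReal
  have m2 : ∀ (a : ℝ) (k : ℕ), Measurable (fun t : ℝ => ENNReal.ofReal (rho β (t - a) ^ k)) :=
    fun a k => (((mrho.comp (measurable_id.sub_const a)).pow_const k)).ennreal_ofReal
  -- nonnegativity helper
  have rnn : ∀ (x : ℝ) (k : ℕ), (0:ℝ) ≤ rho β x ^ k := fun x k => pow_nonneg (rho_nonneg β x) k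
  have mr1 : ∀ (a : ℝ) (k : ℕ), Measurable (fun t : ℝ => rho β (a - t) ^ k) :=
    fun a k => (mrho.comp (measurable_const.sub measurable_id)).pow_const k
  -- innermost level bound
  have inner4 : ∀ t1 t2 t3 : ℝ, t1 ∈ Icc (0:ℝ) L → t2 ∈ Icc (0:ℝ) L → t3 ∈ Icc (0:ℝ) L →
      (∫⁻ t4 in Ioc (0:ℝ) L, ENNReal.ofReal
        (W * (rho β (t1 - t2) ^ (p + q)
            * (rho β (t1 - t3) ^ q + rho β (t2 - t3) ^ q)) * rho β (t3 - t4) ^ p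
        + ((rho β (t1 - t2) ^ p * rho β (t1 - t3) ^ q)
              * (rho β (t3 - t4) ^ p * rho β (t2 - t4) ^ q)
            + (rho β (t1 - t2) ^ p * rho β (t2 - t3) ^ q)
              * (rho β (t3 - t4) ^ p * rho β (t1 - t4) ^ q))
        + W * (rho β (t1 - t2) ^ (p + q))
            * ((rho β (t1 - t4) ^ q + rho β (t2 - t4) ^ q) * rho β (t3 - t4) ^ p)))
      ≤ ENNReal.ofReal (W * (rho β (t1 - t2) ^ (p + q)
            * (rho β (t1 - t3) ^ q + rho β (t2 - t3) ^ q))) * Ap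
        + ((ENNReal.ofReal (rho β (t1 - t2) ^ p * rho β (t1 - t3) ^ q) * (Ad + Ad))
            + (ENNReal.ofReal (rho β (t1 - t2) ^ p * rho β (t2 - t3) ^ q) * (Ad + Ad)))
        + ∫⁻ t4 in Ioc (0:ℝ) L, ENNReal.ofReal (W * (rho β (t1 - t2) ^ (p + q))
            * ((rho β (t1 - t4) ^ q + rho β (t2 - t4) ^ q) * rho β (t3 - t4) ^ p)) := by
    intro t1 t2 t3 ht1 ht2 ht3
    have EB1 : ∫⁻ t4 in Ioc (0:ℝ) L, ENNReal.ofReal (rho β (t3 - t4) ^ p) ≤ Ap :=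
      lint_rho_bound p cp L t3 hcp0 hcp1 (by exact_mod_cast hcpβ) hL ht3
    have EB2 : ∫⁻ t4 in Ioc (0:ℝ) L, ENNReal.ofReal (rho β (t3 - t4) ^ (p + q)) ≤ Ad :=
      lint_rho_bound (p+q) cd L t3 hcd0 hcd1 (by exact_mod_cast hcdβ) hL ht3
    have EB3 : ∫⁻ t4 in Ioc (0:ℝ) L, ENNReal.ofReal (rho β (t2 - t4) ^ (p + q)) ≤ Ad :=
      lint_rho_bound (p+q) cd L t2 hcd0 hcd1 (by exact_mod_cast hcdβ) hL ht2
    have EB4 : ∫⁻ t4 in Ioc (0:ℝ) L, ENNReal.ofReal (rho β (t1 - t4) ^ (p + q)) ≤ Ad :=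
      lint_rho_bound (p+q) cd L t1 hcd0 hcd1 (by exact_mod_cast hcdβ) hL ht1
    have nA : (0:ℝ) ≤ W * (rho β (t1 - t2) ^ (p + q)
        * (rho β (t1 - t3) ^ q + rho β (t2 - t3) ^ q)) :=
      mul_nonneg hWnn (mul_nonneg (rnn _ _) (add_nonneg (rnn _ _) (rnn _ _)))
    have nB1 : (0:ℝ) ≤ rho β (t1 - t2) ^ p * rho β (t1 - t3) ^ q :=
      mul_nonneg (rnn _ _) (rnn _ _)
    have nB2 : (0:ℝ) ≤ rho β (t1 - t2) ^ p * rho β (t2 - t3) ^ q :=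
      mul_nonneg (rnn _ _) (rnn _ _)
    have hc1 : ∫⁻ t4 in Ioc (0:ℝ) L, ENNReal.ofReal
        (W * (rho β (t1 - t2) ^ (p + q)
          * (rho β (t1 - t3) ^ q + rho β (t2 - t3) ^ q)) * rho β (t3 - t4) ^ p)
        ≤ ENNReal.ofReal (W * (rho β (t1 - t2) ^ (p + q)
          * (rho β (t1 - t3) ^ q + rho β (t2 - t3) ^ q))) * Ap := by
      have e : ∀ t4 : ℝ, ENNReal.ofReal
          (W * (rho β (t1 - t2) ^ (p + q)
            * (rho β (t1 - t3) ^ q + rho β (t2 - t3) ^ q)) * rho β (t3 - t4) ^ p)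
          = ENNReal.ofReal (W * (rho β (t1 - t2) ^ (p + q)
            * (rho β (t1 - t3) ^ q + rho β (t2 - t3) ^ q)))
            * ENNReal.ofReal (rho β (t3 - t4) ^ p) :=
        fun t4 => ENNReal.ofReal_mul nA
      rw [lintegral_congr e, lintegral_const_mul' _ _ ENNReal.ofReal_ne_top]
      exact mul_le_mul_right EB1 _
    have hsplit24 : ∫⁻ t4 in Ioc (0:ℝ) L, ENNReal.ofReal
        (rho β (t3 - t4) ^ p * rho β (t2 - t4) ^ q) ≤ Ad + Ad := by
      calc ∫⁻ t4 in Ioc (0:ℝ) L, ENNReal.ofReal (rho β (t3 - t4) ^ p * rho β (t2 - t4) ^ q)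
          ≤ ∫⁻ t4 in Ioc (0:ℝ) L, (ENNReal.ofReal (rho β (t3 - t4) ^ (p + q))
              + ENNReal.ofReal (rho β (t2 - t4) ^ (p + q))) :=
            lintegral_mono (fun t4 => le_trans (ENNReal.ofReal_le_ofReal
              (pow_mul_pow_le _ _ (rho_nonneg _ _) (rho_nonneg _ _) p q)) ENNReal.ofReal_add_le)
        _ = (∫⁻ t4 in Ioc (0:ℝ) L, ENNReal.ofReal (rho β (t3 - t4) ^ (p + q)))
            + ∫⁻ t4 in Ioc (0:ℝ) L, ENNReal.ofReal (rho β (t2 - t4) ^ (p + q)) :=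
            lintegral_add_left (m1 t3 (p+q)) _
        _ ≤ Ad + Ad := add_le_add EB2 EB3
    have hsplit14 : ∫⁻ t4 in Ioc (0:ℝ) L, ENNReal.ofReal
        (rho β (t3 - t4) ^ p * rho β (t1 - t4) ^ q) ≤ Ad + Ad := by
      calc ∫⁻ t4 in Ioc (0:ℝ) L, ENNReal.ofReal (rho β (t3 - t4) ^ p * rho β (t1 - t4) ^ q)
          ≤ ∫⁻ t4 in Ioc (0:ℝ) L, (ENNReal.ofReal (rho β (t3 - t4) ^ (p + q))
              + ENNReal.ofReal (rho β (t1 - t4) ^ (p + q))) :=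
            lintegral_mono (fun t4 => le_trans (ENNReal.ofReal_le_ofReal
              (pow_mul_pow_le _ _ (rho_nonneg _ _) (rho_nonneg _ _) p q)) ENNReal.ofReal_add_le)
        _ = (∫⁻ t4 in Ioc (0:ℝ) L, ENNReal.ofReal (rho β (t3 - t4) ^ (p + q)))
            + ∫⁻ t4 in Ioc (0:ℝ) L, ENNReal.ofReal (rho β (t1 - t4) ^ (p + q)) :=
            lintegral_add_left (m1 t3 (p+q)) _
        _ ≤ Ad + Ad := add_le_add EB2 EB4
    have hc2a : ∫⁻ t4 in Ioc (0:ℝ) L, ENNReal.ofReal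
        ((rho β (t1 - t2) ^ p * rho β (t1 - t3) ^ q)
          * (rho β (t3 - t4) ^ p * rho β (t2 - t4) ^ q))
        ≤ ENNReal.ofReal (rho β (t1 - t2) ^ p * rho β (t1 - t3) ^ q) * (Ad + Ad) := by
      have e : ∀ t4 : ℝ, ENNReal.ofReal ((rho β (t1 - t2) ^ p * rho β (t1 - t3) ^ q)
          * (rho β (t3 - t4) ^ p * rho β (t2 - t4) ^ q))
          = ENNReal.ofReal (rho β (t1 - t2) ^ p * rho β (t1 - t3) ^ q)
            * ENNReal.ofReal (rho β (t3 - t4) ^ p * rho β (t2 - t4) ^ q) :=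
        fun t4 => ENNReal.ofReal_mul nB1
      rw [lintegral_congr e, lintegral_const_mul' _ _ ENNReal.ofReal_ne_top]
      exact mul_le_mul_right hsplit24 _
    have hc2b : ∫⁻ t4 in Ioc (0:ℝ) L, ENNReal.ofReal
        ((rho β (t1 - t2) ^ p * rho β (t2 - t3) ^ q)
          * (rho β (t3 - t4) ^ p * rho β (t1 - t4) ^ q))
        ≤ ENNReal.ofReal (rho β (t1 - t2) ^ p * rho β (t2 - t3) ^ q) * (Ad + Ad) := by
      have e : ∀ t4 : ℝ, ENNReal.ofReal ((rho β (t1 - t2) ^ p * rho β (t2 - t3) ^ q)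
          * (rho β (t3 - t4) ^ p * rho β (t1 - t4) ^ q))
          = ENNReal.ofReal (rho β (t1 - t2) ^ p * rho β (t2 - t3) ^ q)
            * ENNReal.ofReal (rho β (t3 - t4) ^ p * rho β (t1 - t4) ^ q) :=
        fun t4 => ENNReal.ofReal_mul nB2
      rw [lintegral_congr e, lintegral_const_mul' _ _ ENNReal.ofReal_ne_top]
      exact mul_le_mul_right hsplit14 _
    -- combine
    calc ∫⁻ t4 in Ioc (0:ℝ) L, ENNReal.ofReal (_ + (_ + _) + _)
        ≤ ∫⁻ t4 in Ioc (0:ℝ) L,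
            (ENNReal.ofReal (W * (rho β (t1 - t2) ^ (p + q)
                * (rho β (t1 - t3) ^ q + rho β (t2 - t3) ^ q)) * rho β (t3 - t4) ^ p)
              + (ENNReal.ofReal ((rho β (t1 - t2) ^ p * rho β (t1 - t3) ^ q)
                    * (rho β (t3 - t4) ^ p * rho β (t2 - t4) ^ q))
                  + ENNReal.ofReal ((rho β (t1 - t2) ^ p * rho β (t2 - t3) ^ q)
                    * (rho β (t3 - t4) ^ p * rho β (t1 - t4) ^ q)))
              + ENNReal.ofReal (W * (rho β (t1 - t2) ^ (p + q))
                  * ((rho β (t1 - t4) ^ q + rho β (t2 - t4) ^ q) * rho β (t3 - t4) ^ p))) := by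
          apply lintegral_mono
          intro t4
          refine le_trans ENNReal.ofReal_add_le (add_le_add ?_ le_rfl)
          refine le_trans ENNReal.ofReal_add_le (add_le_add le_rfl ?_)
          exact ENNReal.ofReal_add_le
      _ = (∫⁻ t4 in Ioc (0:ℝ) L, (ENNReal.ofReal (W * (rho β (t1 - t2) ^ (p + q)
                * (rho β (t1 - t3) ^ q + rho β (t2 - t3) ^ q)) * rho β (t3 - t4) ^ p)
              + (ENNReal.ofReal ((rho β (t1 - t2) ^ p * rho β (t1 - t3) ^ q)
                    * (rho β (t3 - t4) ^ p * rho β (t2 - t4) ^ q))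
                  + ENNReal.ofReal ((rho β (t1 - t2) ^ p * rho β (t2 - t3) ^ q)
                    * (rho β (t3 - t4) ^ p * rho β (t1 - t4) ^ q)))))
          + ∫⁻ t4 in Ioc (0:ℝ) L, ENNReal.ofReal (W * (rho β (t1 - t2) ^ (p + q))
              * ((rho β (t1 - t4) ^ q + rho β (t2 - t4) ^ q) * rho β (t3 - t4) ^ p)) := by
          apply lintegral_add_left
          apply Measurable.fun_add
          · exact (measurable_const.mul (mr1 t3 p)).ennreal_ofReal
          · apply Measurable.fun_add
            · exact (measurable_const.mul ((mr1 t3 p).mul (mr1 t2 q))).ennreal_ofReal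
            · exact (measurable_const.mul ((mr1 t3 p).mul (mr1 t1 q))).ennreal_ofReal
      _ = (∫⁻ t4 in Ioc (0:ℝ) L, ENNReal.ofReal (W * (rho β (t1 - t2) ^ (p + q)
                * (rho β (t1 - t3) ^ q + rho β (t2 - t3) ^ q)) * rho β (t3 - t4) ^ p))
          + (∫⁻ t4 in Ioc (0:ℝ) L,
              (ENNReal.ofReal ((rho β (t1 - t2) ^ p * rho β (t1 - t3) ^ q)
                    * (rho β (t3 - t4) ^ p * rho β (t2 - t4) ^ q))
                  + ENNReal.ofReal ((rho β (t1 - t2) ^ p * rho β (t2 - t3) ^ q)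
                    * (rho β (t3 - t4) ^ p * rho β (t1 - t4) ^ q))))
          + ∫⁻ t4 in Ioc (0:ℝ) L, ENNReal.ofReal (W * (rho β (t1 - t2) ^ (p + q))
              * ((rho β (t1 - t4) ^ q + rho β (t2 - t4) ^ q) * rho β (t3 - t4) ^ p)) := by
          rw [lintegral_add_left ((measurable_const.fun_mul (mr1 t3 p)).ennreal_ofReal)]
      _ = (∫⁻ t4 in Ioc (0:ℝ) L, ENNReal.ofReal (W * (rho β (t1 - t2) ^ (p + q)
                * (rho β (t1 - t3) ^ q + rho β (t2 - t3) ^ q)) * rho β (t3 - t4) ^ p))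
          + ((∫⁻ t4 in Ioc (0:ℝ) L, ENNReal.ofReal ((rho β (t1 - t2) ^ p * rho β (t1 - t3) ^ q)
                    * (rho β (t3 - t4) ^ p * rho β (t2 - t4) ^ q)))
              + ∫⁻ t4 in Ioc (0:ℝ) L, ENNReal.ofReal ((rho β (t1 - t2) ^ p * rho β (t2 - t3) ^ q)
                    * (rho β (t3 - t4) ^ p * rho β (t1 - t4) ^ q)))
          + ∫⁻ t4 in Ioc (0:ℝ) L, ENNReal.ofReal (W * (rho β (t1 - t2) ^ (p + q))
              * ((rho β (t1 - t4) ^ q + rho β (t2 - t4) ^ q) * rho β (t3 - t4) ^ p)) := by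
          rw [lintegral_add_left ((measurable_const.fun_mul ((mr1 t3 p).fun_mul (mr1 t2 q))).ennreal_ofReal)]
      _ ≤ _ := add_le_add (add_le_add hc1 (add_le_add hc2a hc2b)) le_rfl

  -- level-3 bound
  have inner3 : ∀ t1 t2 : ℝ, t1 ∈ Icc (0:ℝ) L → t2 ∈ Icc (0:ℝ) L →
      (∫⁻ t3 in Ioc (0:ℝ) L, ∫⁻ t4 in Ioc (0:ℝ) L, ENNReal.ofReal
        (W * (rho β (t1 - t2) ^ (p + q)
            * (rho β (t1 - t3) ^ q + rho β (t2 - t3) ^ q)) * rho β (t3 - t4) ^ p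
        + ((rho β (t1 - t2) ^ p * rho β (t1 - t3) ^ q)
              * (rho β (t3 - t4) ^ p * rho β (t2 - t4) ^ q)
            + (rho β (t1 - t2) ^ p * rho β (t2 - t3) ^ q)
              * (rho β (t3 - t4) ^ p * rho β (t1 - t4) ^ q))
        + W * (rho β (t1 - t2) ^ (p + q))
            * ((rho β (t1 - t4) ^ q + rho β (t2 - t4) ^ q) * rho β (t3 - t4) ^ p)))
      ≤ (W' * ENNReal.ofReal (rho β (t1 - t2) ^ (p + q)) * Ap) * (Aq + Aq)
        + (ENNReal.ofReal (rho β (t1 - t2) ^ p) * (Ad + Ad)) * (Aq + Aq)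
        + (W' * ENNReal.ofReal (rho β (t1 - t2) ^ (p + q)) * Ap) * (Aq + Aq) := by
    intro t1 t2 ht1 ht2
    have EBq1 : ∫⁻ t in Ioc (0:ℝ) L, ENNReal.ofReal (rho β (t1 - t) ^ q) ≤ Aq :=
      lint_rho_bound q cq L t1 hcq0 hcq1 (by exact_mod_cast hcqβ) hL ht1
    have EBq2 : ∫⁻ t in Ioc (0:ℝ) L, ENNReal.ofReal (rho β (t2 - t) ^ q) ≤ Aq :=
      lint_rho_bound q cq L t2 hcq0 hcq1 (by exact_mod_cast hcqβ) hL ht2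
    have step1 : (∫⁻ t3 in Ioc (0:ℝ) L, ∫⁻ t4 in Ioc (0:ℝ) L, ENNReal.ofReal
        (W * (rho β (t1 - t2) ^ (p + q)
            * (rho β (t1 - t3) ^ q + rho β (t2 - t3) ^ q)) * rho β (t3 - t4) ^ p
        + ((rho β (t1 - t2) ^ p * rho β (t1 - t3) ^ q)
              * (rho β (t3 - t4) ^ p * rho β (t2 - t4) ^ q)
            + (rho β (t1 - t2) ^ p * rho β (t2 - t3) ^ q)
              * (rho β (t3 - t4) ^ p * rho β (t1 - t4) ^ q))
        + W * (rho β (t1 - t2) ^ (p + q))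
            * ((rho β (t1 - t4) ^ q + rho β (t2 - t4) ^ q) * rho β (t3 - t4) ^ p)))
        ≤ ∫⁻ t3 in Ioc (0:ℝ) L,
          ((ENNReal.ofReal (W * (rho β (t1 - t2) ^ (p + q)
              * (rho β (t1 - t3) ^ q + rho β (t2 - t3) ^ q))) * Ap
            + ((ENNReal.ofReal (rho β (t1 - t2) ^ p * rho β (t1 - t3) ^ q) * (Ad + Ad))
                + (ENNReal.ofReal (rho β (t1 - t2) ^ p * rho β (t2 - t3) ^ q) * (Ad + Ad))))
          + ∫⁻ t4 in Ioc (0:ℝ) L, ENNReal.ofReal (W * (rho β (t1 - t2) ^ (p + q))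
              * ((rho β (t1 - t4) ^ q + rho β (t2 - t4) ^ q) * rho β (t3 - t4) ^ p))) := by
      apply lintegral_mono_ae
      rw [ae_restrict_iff' measurableSet_Ioc]
      apply Filter.Eventually.of_forall
      intro t3 ht3
      exact inner4 t1 t2 t3 ht1 ht2 (Ioc_subset_Icc_self ht3)
    refine step1.trans ?_
    have mgexp : Measurable (fun t3 : ℝ =>
        ENNReal.ofReal (W * (rho β (t1 - t2) ^ (p + q)
            * (rho β (t1 - t3) ^ q + rho β (t2 - t3) ^ q))) * Ap
          + ((ENNReal.ofReal (rho β (t1 - t2) ^ p * rho β (t1 - t3) ^ q) * (Ad + Ad))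
              + (ENNReal.ofReal (rho β (t1 - t2) ^ p * rho β (t2 - t3) ^ q) * (Ad + Ad)))) := by
      apply Measurable.fun_add
      · exact ((measurable_const.mul ((measurable_const.mul
          ((mr1 t1 q).add (mr1 t2 q))))).ennreal_ofReal).mul_const Ap
      · exact (((measurable_const.mul (mr1 t1 q)).ennreal_ofReal.mul_const (Ad+Ad)).add
          ((measurable_const.mul (mr1 t2 q)).ennreal_ofReal.mul_const (Ad+Ad)))
    rw [lintegral_add_left mgexp]
    have splitA : (∫⁻ t3 in Ioc (0:ℝ) L,
        (ENNReal.ofReal (W * (rho β (t1 - t2) ^ (p + q)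
            * (rho β (t1 - t3) ^ q + rho β (t2 - t3) ^ q))) * Ap
          + ((ENNReal.ofReal (rho β (t1 - t2) ^ p * rho β (t1 - t3) ^ q) * (Ad + Ad))
              + (ENNReal.ofReal (rho β (t1 - t2) ^ p * rho β (t2 - t3) ^ q) * (Ad + Ad)))))
        ≤ (W' * ENNReal.ofReal (rho β (t1 - t2) ^ (p + q)) * Ap) * (Aq + Aq)
          + (ENNReal.ofReal (rho β (t1 - t2) ^ p) * (Ad + Ad)) * (Aq + Aq) := by
      rw [lintegral_add_left (((measurable_const.fun_mul ((measurable_const.fun_mul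
          ((mr1 t1 q).fun_add (mr1 t2 q))))).ennreal_ofReal).mul_const Ap)]
      apply add_le_add
      · -- gA
        have e : ∀ t3 : ℝ, ENNReal.ofReal (W * (rho β (t1 - t2) ^ (p + q)
            * (rho β (t1 - t3) ^ q + rho β (t2 - t3) ^ q))) * Ap
            = (W' * ENNReal.ofReal (rho β (t1 - t2) ^ (p + q)) * Ap)
              * (ENNReal.ofReal (rho β (t1 - t3) ^ q) + ENNReal.ofReal (rho β (t2 - t3) ^ q)) := by
          intro t3
          rw [ENNReal.ofReal_mul hWnn, ENNReal.ofReal_mul (rnn _ _),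
            ENNReal.ofReal_add (rnn _ _) (rnn _ _), hW']
          ring
        rw [lintegral_congr e, lintegral_const_mul' _ _
          (ENNReal.mul_ne_top (ENNReal.mul_ne_top hW'ne ENNReal.ofReal_ne_top) hApne)]
        refine mul_le_mul_right ?_ _
        rw [lintegral_add_left (m1 t1 q)]
        exact add_le_add EBq1 EBq2
      · -- gB
        have e : ∀ t3 : ℝ, ENNReal.ofReal (rho β (t1 - t2) ^ p * rho β (t1 - t3) ^ q) * (Ad + Ad)
            + ENNReal.ofReal (rho β (t1 - t2) ^ p * rho β (t2 - t3) ^ q) * (Ad + Ad)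
            = (ENNReal.ofReal (rho β (t1 - t2) ^ p) * (Ad + Ad))
              * (ENNReal.ofReal (rho β (t1 - t3) ^ q) + ENNReal.ofReal (rho β (t2 - t3) ^ q)) := by
          intro t3
          rw [ENNReal.ofReal_mul (rnn _ _), ENNReal.ofReal_mul (rnn _ _)]
          ring
        rw [lintegral_congr e, lintegral_const_mul' _ _
          (ENNReal.mul_ne_top ENNReal.ofReal_ne_top (ENNReal.add_ne_top.2 ⟨hAdne, hAdne⟩))]
        refine mul_le_mul_right ?_ _
        rw [lintegral_add_left (m1 t1 q)]
        exact add_le_add EBq1 EBq2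
    have step6 : (∫⁻ t3 in Ioc (0:ℝ) L, ∫⁻ t4 in Ioc (0:ℝ) L,
        ENNReal.ofReal (W * (rho β (t1 - t2) ^ (p + q))
          * ((rho β (t1 - t4) ^ q + rho β (t2 - t4) ^ q) * rho β (t3 - t4) ^ p)))
        ≤ (W' * ENNReal.ofReal (rho β (t1 - t2) ^ (p + q)) * Ap) * (Aq + Aq) := by
      have mF : AEMeasurable (Function.uncurry (fun t3 t4 : ℝ =>
          ENNReal.ofReal (W * (rho β (t1 - t2) ^ (p + q))
            * ((rho β (t1 - t4) ^ q + rho β (t2 - t4) ^ q) * rho β (t3 - t4) ^ p))))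
          ((volume.restrict (Ioc (0:ℝ) L)).prod (volume.restrict (Ioc (0:ℝ) L))) := by
        apply Measurable.aemeasurable
        apply Measurable.ennreal_ofReal
        apply Measurable.mul measurable_const
        apply Measurable.mul
        · exact (((mrho.comp (measurable_const.sub measurable_snd)).pow_const q).add
            ((mrho.comp (measurable_const.sub measurable_snd)).pow_const q))
        · exact (mrho.comp (measurable_fst.sub measurable_snd)).pow_const p
      rw [lintegral_lintegral_swap mF]
      have inner : ∀ t4 : ℝ, t4 ∈ Icc (0:ℝ) L →
          (∫⁻ t3 in Ioc (0:ℝ) L, ENNReal.ofReal (W * (rho β (t1 - t2) ^ (p + q))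
            * ((rho β (t1 - t4) ^ q + rho β (t2 - t4) ^ q) * rho β (t3 - t4) ^ p)))
          ≤ ENNReal.ofReal (W * (rho β (t1 - t2) ^ (p + q))
              * (rho β (t1 - t4) ^ q + rho β (t2 - t4) ^ q)) * Ap := by
        intro t4 ht4
        have e : ∀ t3 : ℝ, ENNReal.ofReal (W * (rho β (t1 - t2) ^ (p + q))
            * ((rho β (t1 - t4) ^ q + rho β (t2 - t4) ^ q) * rho β (t3 - t4) ^ p))
            = ENNReal.ofReal (W * (rho β (t1 - t2) ^ (p + q))
                * (rho β (t1 - t4) ^ q + rho β (t2 - t4) ^ q))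
              * ENNReal.ofReal (rho β (t3 - t4) ^ p) := by
          intro t3
          rw [← ENNReal.ofReal_mul (mul_nonneg (mul_nonneg hWnn (rnn _ _))
            (add_nonneg (rnn _ _) (rnn _ _)))]
          congr 1
          ring
        rw [lintegral_congr e, lintegral_const_mul' _ _ ENNReal.ofReal_ne_top]
        exact mul_le_mul_right (lint_rho_bound' p cp L t4 hcp0 hcp1
          (by exact_mod_cast hcpβ) hL ht4) _
      calc (∫⁻ t4 in Ioc (0:ℝ) L, ∫⁻ t3 in Ioc (0:ℝ) L,
          ENNReal.ofReal (W * (rho β (t1 - t2) ^ (p + q))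
            * ((rho β (t1 - t4) ^ q + rho β (t2 - t4) ^ q) * rho β (t3 - t4) ^ p)))
          ≤ ∫⁻ t4 in Ioc (0:ℝ) L, ENNReal.ofReal (W * (rho β (t1 - t2) ^ (p + q))
              * (rho β (t1 - t4) ^ q + rho β (t2 - t4) ^ q)) * Ap := by
            apply lintegral_mono_ae
            rw [ae_restrict_iff' measurableSet_Ioc]
            exact Filter.Eventually.of_forall (fun t4 ht4 => inner t4 (Ioc_subset_Icc_self ht4))
        _ ≤ (W' * ENNReal.ofReal (rho β (t1 - t2) ^ (p + q)) * Ap) * (Aq + Aq) := by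
            have e : ∀ t4 : ℝ, ENNReal.ofReal (W * (rho β (t1 - t2) ^ (p + q))
                * (rho β (t1 - t4) ^ q + rho β (t2 - t4) ^ q)) * Ap
                = (W' * ENNReal.ofReal (rho β (t1 - t2) ^ (p + q)) * Ap)
                  * (ENNReal.ofReal (rho β (t1 - t4) ^ q)
                      + ENNReal.ofReal (rho β (t2 - t4) ^ q)) := by
              intro t4
              rw [ENNReal.ofReal_mul (mul_nonneg hWnn (rnn _ _)),
                ENNReal.ofReal_mul hWnn, ENNReal.ofReal_add (rnn _ _) (rnn _ _), hW']
              ring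
            rw [lintegral_congr e, lintegral_const_mul' _ _
              (ENNReal.mul_ne_top (ENNReal.mul_ne_top hW'ne ENNReal.ofReal_ne_top) hApne)]
            refine mul_le_mul_right ?_ _
            rw [lintegral_add_left (m1 t1 q)]
            exact add_le_add EBq1 EBq2
    exact add_le_add splitA step6
  -- level-2 bound
  set K1 : ℝ≥0∞ := W' * Ap * (Aq + Aq) + W' * Ap * (Aq + Aq) with hK1
  set K2 : ℝ≥0∞ := (Ad + Ad) * (Aq + Aq) with hK2
  have hK1ne : K1 ≠ ⊤ := by
    rw [hK1]
    refine ENNReal.add_ne_top.2 ⟨?_, ?_⟩ <;>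
      exact ENNReal.mul_ne_top (ENNReal.mul_ne_top hW'ne hApne)
        (ENNReal.add_ne_top.2 ⟨hAqne, hAqne⟩)
  have hK2ne : K2 ≠ ⊤ := by
    rw [hK2]
    exact ENNReal.mul_ne_top (ENNReal.add_ne_top.2 ⟨hAdne, hAdne⟩)
      (ENNReal.add_ne_top.2 ⟨hAqne, hAqne⟩)
  have inner2 : ∀ t1 : ℝ, t1 ∈ Icc (0:ℝ) L →
      (∫⁻ t2 in Ioc (0:ℝ) L, ∫⁻ t3 in Ioc (0:ℝ) L, ∫⁻ t4 in Ioc (0:ℝ) L, ENNReal.ofReal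
        (W * (rho β (t1 - t2) ^ (p + q)
            * (rho β (t1 - t3) ^ q + rho β (t2 - t3) ^ q)) * rho β (t3 - t4) ^ p
        + ((rho β (t1 - t2) ^ p * rho β (t1 - t3) ^ q)
              * (rho β (t3 - t4) ^ p * rho β (t2 - t4) ^ q)
            + (rho β (t1 - t2) ^ p * rho β (t2 - t3) ^ q)
              * (rho β (t3 - t4) ^ p * rho β (t1 - t4) ^ q))
        + W * (rho β (t1 - t2) ^ (p + q))
            * ((rho β (t1 - t4) ^ q + rho β (t2 - t4) ^ q) * rho β (t3 - t4) ^ p)))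
      ≤ K1 * Ad + K2 * Ap := by
    intro t1 ht1
    calc (∫⁻ t2 in Ioc (0:ℝ) L, ∫⁻ t3 in Ioc (0:ℝ) L, ∫⁻ t4 in Ioc (0:ℝ) L, ENNReal.ofReal
        (W * (rho β (t1 - t2) ^ (p + q)
            * (rho β (t1 - t3) ^ q + rho β (t2 - t3) ^ q)) * rho β (t3 - t4) ^ p
        + ((rho β (t1 - t2) ^ p * rho β (t1 - t3) ^ q)
              * (rho β (t3 - t4) ^ p * rho β (t2 - t4) ^ q)
            + (rho β (t1 - t2) ^ p * rho β (t2 - t3) ^ q)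
              * (rho β (t3 - t4) ^ p * rho β (t1 - t4) ^ q))
        + W * (rho β (t1 - t2) ^ (p + q))
            * ((rho β (t1 - t4) ^ q + rho β (t2 - t4) ^ q) * rho β (t3 - t4) ^ p)))
        ≤ ∫⁻ t2 in Ioc (0:ℝ) L,
            (K1 * ENNReal.ofReal (rho β (t1 - t2) ^ (p + q))
              + K2 * ENNReal.ofReal (rho β (t1 - t2) ^ p)) := by
          apply lintegral_mono_ae
          rw [ae_restrict_iff' measurableSet_Ioc]
          apply Filter.Eventually.of_forall
          intro t2 ht2
          refine (inner3 t1 t2 ht1 (Ioc_subset_Icc_self ht2)).trans ?_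
          apply le_of_eq
          rw [hK1, hK2]
          ring
      _ = K1 * (∫⁻ t2 in Ioc (0:ℝ) L, ENNReal.ofReal (rho β (t1 - t2) ^ (p + q)))
          + K2 * ∫⁻ t2 in Ioc (0:ℝ) L, ENNReal.ofReal (rho β (t1 - t2) ^ p) := by
          rw [lintegral_add_left ((m1 t1 (p+q)).const_mul K1),
            lintegral_const_mul' _ _ hK1ne, lintegral_const_mul' _ _ hK2ne]
      _ ≤ K1 * Ad + K2 * Ap := by
          apply add_le_add
          · exact mul_le_mul_right (lint_rho_bound (p+q) cd L t1 hcd0 hcd1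
              (by exact_mod_cast hcdβ) hL ht1) _
          · exact mul_le_mul_right (lint_rho_bound p cp L t1 hcp0 hcp1
              (by exact_mod_cast hcpβ) hL ht1) _
  -- top level
  have top : (∫⁻ t1 in Ioc (0:ℝ) L, ∫⁻ t2 in Ioc (0:ℝ) L, ∫⁻ t3 in Ioc (0:ℝ) L,
      ∫⁻ t4 in Ioc (0:ℝ) L, ENNReal.ofReal
        (W * (rho β (t1 - t2) ^ (p + q)
            * (rho β (t1 - t3) ^ q + rho β (t2 - t3) ^ q)) * rho β (t3 - t4) ^ p
        + ((rho β (t1 - t2) ^ p * rho β (t1 - t3) ^ q)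
              * (rho β (t3 - t4) ^ p * rho β (t2 - t4) ^ q)
            + (rho β (t1 - t2) ^ p * rho β (t2 - t3) ^ q)
              * (rho β (t3 - t4) ^ p * rho β (t1 - t4) ^ q))
        + W * (rho β (t1 - t2) ^ (p + q))
            * ((rho β (t1 - t4) ^ q + rho β (t2 - t4) ^ q) * rho β (t3 - t4) ^ p)))
      ≤ (K1 * Ad + K2 * Ap) * ENNReal.ofReal L := by
    calc _ ≤ ∫⁻ _t1 in Ioc (0:ℝ) L, (K1 * Ad + K2 * Ap) := by
          apply lintegral_mono_ae
          rw [ae_restrict_iff' measurableSet_Ioc]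
          exact Filter.Eventually.of_forall
            (fun t1 ht1 => inner2 t1 (Ioc_subset_Icc_self ht1))
      _ = (K1 * Ad + K2 * Ap) * ENNReal.ofReal L := by
          rw [setLIntegral_const, Real.volume_Ioc, sub_zero]
  -- combine: pointwise chunk bound, then top
  have mono_chunks : (∫⁻ t1 in Ioc (0:ℝ) L, ∫⁻ t2 in Ioc (0:ℝ) L, ∫⁻ t3 in Ioc (0:ℝ) L,
      ∫⁻ t4 in Ioc (0:ℝ) L, ENNReal.ofReal
        (rho β (t1 - t2) ^ p * rho β (t3 - t4) ^ p * rho β (t1 - t3) ^ B13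
          * rho β (t1 - t4) ^ B14 * rho β (t2 - t3) ^ B23 * rho β (t2 - t4) ^ B24))
      ≤ (∫⁻ t1 in Ioc (0:ℝ) L, ∫⁻ t2 in Ioc (0:ℝ) L, ∫⁻ t3 in Ioc (0:ℝ) L,
      ∫⁻ t4 in Ioc (0:ℝ) L, ENNReal.ofReal
        (W * (rho β (t1 - t2) ^ (p + q)
            * (rho β (t1 - t3) ^ q + rho β (t2 - t3) ^ q)) * rho β (t3 - t4) ^ p
        + ((rho β (t1 - t2) ^ p * rho β (t1 - t3) ^ q)
              * (rho β (t3 - t4) ^ p * rho β (t2 - t4) ^ q)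
            + (rho β (t1 - t2) ^ p * rho β (t2 - t3) ^ q)
              * (rho β (t3 - t4) ^ p * rho β (t1 - t4) ^ q))
        + W * (rho β (t1 - t2) ^ (p + q))
            * ((rho β (t1 - t4) ^ q + rho β (t2 - t4) ^ q) * rho β (t3 - t4) ^ p))) := by
    apply lintegral_mono; intro t1
    apply lintegral_mono; intro t2
    apply lintegral_mono; intro t3
    apply lintegral_mono; intro t4
    exact ENNReal.ofReal_le_ofReal (pointwise_chunks hβ p q B13 B14 B23 B24 h1 h2 t1 t2 t3 t4)
  refine (mono_chunks.trans top).trans (le_of_eq ?_)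
  have hap : (0:ℝ) ≤ Kp * L ^ (1-cp) := mul_nonneg hKpnn hLp
  have haq : (0:ℝ) ≤ Kq * L ^ (1-cq) := mul_nonneg hKqnn hLq
  have had : (0:ℝ) ≤ Kd * L ^ (1-cd) := mul_nonneg hKdnn hLd
  have n1 : (0:ℝ) ≤ W * (Kp * L ^ (1-cp)) := mul_nonneg hWnn hap
  have n2 : (0:ℝ) ≤ W * (Kp * L ^ (1-cp)) * (Kq * L ^ (1-cq) + Kq * L ^ (1-cq)) :=
    mul_nonneg n1 (add_nonneg haq haq)
  have n3 : (0:ℝ) ≤ Kd * L ^ (1-cd) + Kd * L ^ (1-cd) := add_nonneg had had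
  have n4 : (0:ℝ) ≤ (Kd * L ^ (1-cd) + Kd * L ^ (1-cd)) * (Kq * L ^ (1-cq) + Kq * L ^ (1-cq)) :=
    mul_nonneg n3 (add_nonneg haq haq)
  have n5 : (0:ℝ) ≤ W * (Kp * L ^ (1-cp)) * (Kq * L ^ (1-cq) + Kq * L ^ (1-cq))
      + W * (Kp * L ^ (1-cp)) * (Kq * L ^ (1-cq) + Kq * L ^ (1-cq)) := add_nonneg n2 n2
  rw [hK1, hK2, hAp, hAq, hAd, hW']
  rw [← ENNReal.ofReal_add haq haq, ← ENNReal.ofReal_mul hWnn, ← ENNReal.ofReal_mul n1,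
    ← ENNReal.ofReal_add n2 n2, ← ENNReal.ofReal_add had had, ← ENNReal.ofReal_mul n5,
    ← ENNReal.ofReal_mul n3, ← ENNReal.ofReal_mul n4,
    ← ENNReal.ofReal_add (mul_nonneg n5 had) (mul_nonneg n4 hap),
    ← ENNReal.ofReal_mul (add_nonneg (mul_nonneg n5 had) (mul_nonneg n4 hap))]
  congr 1
  ring


lemma intII_le_lint (f : ℝ → ℝ) (L : ℝ) (hL : 0 ≤ L) (hf : ∀ t, 0 ≤ f t) :
    ∫ t in (0:ℝ)..L, f t ≤ (∫⁻ t in Ioc (0:ℝ) L, ENNReal.ofReal (f t)).toReal := by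
  rw [intervalIntegral.integral_of_le hL]
  by_cases h : AEStronglyMeasurable f (volume.restrict (Ioc (0:ℝ) L))
  · rw [integral_eq_lintegral_of_nonneg_ae (Filter.Eventually.of_forall hf) h]
  · rw [integral_undef (fun hint => h hint.1)]
    exact ENNReal.toReal_nonneg



/-- Vanishing of contractions in the short-range dependent case (Lemma 4.11 of the
paper): with `ρ(s) = min(1,|s|^(−β))` (read as `1` at `s = 0`), `βd > 1`,
`1 ≤ p ≤ d−1`, and nonnegative integers `B₁₃ + B₁₄ = B₂₃ + B₂₄ = d − p`, the
normalized four-fold integral `L^(−2) ∫_{[0,L]^4} ρ^p ρ^p ρ^{B₁₃} ρ^{B₁₄} ρ^{B₂₃} ρ^{B₂₄}`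
tends to `0` as `L → ∞`. -/
theorem contractions_vanish (d p : ℕ) (hd : 2 ≤ d) (hp : 1 ≤ p) (hpd : p ≤ d - 1)
    (β : ℝ) (hβ : 0 < β) (hβd : 1 < β * d)
    (B13 B14 B23 B24 : ℕ) (h1 : B13 + B14 = d - p) (h2 : B23 + B24 = d - p) :
    Tendsto (fun L : ℝ =>
        (∫ t₁ in (0:ℝ)..L, ∫ t₂ in (0:ℝ)..L, ∫ t₃ in (0:ℝ)..L, ∫ t₄ in (0:ℝ)..L,
            (if t₁ = t₂ then 1 else min 1 (|t₁ - t₂| ^ (-β))) ^ p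
          * (if t₃ = t₄ then 1 else min 1 (|t₃ - t₄| ^ (-β))) ^ p
          * (if t₁ = t₃ then 1 else min 1 (|t₁ - t₃| ^ (-β))) ^ B13
          * (if t₁ = t₄ then 1 else min 1 (|t₁ - t₄| ^ (-β))) ^ B14
          * (if t₂ = t₃ then 1 else min 1 (|t₂ - t₃| ^ (-β))) ^ B23
          * (if t₂ = t₄ then 1 else min 1 (|t₂ - t₄| ^ (-β))) ^ B24) / L ^ 2)
      atTop (nhds 0) := by
  simp only [rho_eq]
  set q : ℕ := d - p with hqdef
  have hq1 : 1 ≤ q := by omega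
  have hpq : p + q = d := by omega
  -- exponent bookkeeping
  have hp0 : (0:ℝ) < p := by exact_mod_cast hp
  have hq0 : (0:ℝ) < q := by exact_mod_cast hq1
  have hβp : 0 < β * p := mul_pos hβ hp0
  have hβq : 0 < β * q := mul_pos hβ hq0
  have hcast : β * ((p:ℝ) + (q:ℝ)) = β * (d:ℝ) := by
    congr 1
    exact_mod_cast congrArg (Nat.cast : ℕ → ℝ) hpq
  have hΔ : 1 < min (β * p) 1 + min (β * q) 1 := by
    rcases le_or_gt 1 (β * p) with h | h
    · rw [min_eq_right h]
      have : 0 < min (β * q) 1 := lt_min hβq one_pos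
      linarith
    · rw [min_eq_left h.le]
      rcases le_or_gt 1 (β * q) with h' | h'
      · rw [min_eq_right h']; linarith
      · rw [min_eq_left h'.le]
        have : β * (p:ℝ) + β * (q:ℝ) = β * d := by rw [← hcast]; ring
        linarith
  set ε : ℝ := (min (β * p) 1 + min (β * q) 1 - 1) / 4 with hεdef
  have hε0 : 0 < ε := by rw [hεdef]; linarith
  have hε14 : ε ≤ 1/4 := by
    rw [hεdef]
    have h1' : min (β * p) 1 ≤ 1 := min_le_right _ _
    have h2' : min (β * q) 1 ≤ 1 := min_le_right _ _
    linarith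
  set cp : ℝ := min (β * p) (1 - ε) with hcpdef
  set cq : ℝ := min (β * q) (1 - ε) with hcqdef
  set cd : ℝ := 1 - ε with hcddef
  have hcp0 : 0 < cp := lt_min hβp (by linarith)
  have hcp1 : cp < 1 := lt_of_le_of_lt (min_le_right _ _) (by linarith)
  have hcpβ : cp ≤ β * p := min_le_left _ _
  have hcq0 : 0 < cq := lt_min hβq (by linarith)
  have hcq1 : cq < 1 := lt_of_le_of_lt (min_le_right _ _) (by linarith)
  have hcqβ : cq ≤ β * q := min_le_left _ _
  have hcd0 : 0 < cd := by rw [hcddef]; linarith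
  have hcd1 : cd < 1 := by rw [hcddef]; linarith
  have hcdβ : cd ≤ β * ((p:ℝ) + (q:ℝ)) := by
    rw [hcast, hcddef]; linarith
  have hsum : 2 + ε ≤ cp + cq + cd := by
    have e1 : min (β * p) 1 - ε ≤ cp := by
      rcases min_cases (β * p) (1 - ε) with ⟨he, _⟩ | ⟨he, hge⟩
      · rw [hcpdef, he]
        have : min (β * p) 1 ≤ β * p := min_le_left _ _
        linarith
      · rw [hcpdef, he]
        have : min (β * p) 1 ≤ 1 := min_le_right _ _
        linarith
    have e2 : min (β * q) 1 - ε ≤ cq := by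
      rcases min_cases (β * q) (1 - ε) with ⟨he, _⟩ | ⟨he, hge⟩
      · rw [hcqdef, he]
        have : min (β * q) 1 ≤ β * q := min_le_left _ _
        linarith
      · rw [hcqdef, he]
        have : min (β * q) 1 ≤ 1 := min_le_right _ _
        linarith
    have : min (β * p) 1 + min (β * q) 1 = 1 + 4 * ε := by rw [hεdef]; ring
    rw [hcddef]
    linarith
  set θ : ℝ := 4 - (cp + cq + cd) with hθdef
  have hθ2 : θ ≤ 2 - ε := by rw [hθdef]; linarith
  set Ctot : ℝ := 4 * (((2:ℝ) ^ β) ^ q + 1)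
      * ((2 + 2/(1-cp)) * ((2 + 2/(1-cq)) * (2 + 2/(1-cd)))) with hCdef
  have hCnn : 0 ≤ Ctot := by
    rw [hCdef]
    have w : (0:ℝ) ≤ ((2:ℝ) ^ β) ^ q := pow_nonneg (Real.rpow_nonneg (by norm_num) _) q
    have a1 : (0:ℝ) ≤ 2 + 2/(1-cp) := by
      have := div_nonneg (by norm_num : (0:ℝ) ≤ 2) (by linarith : (0:ℝ) ≤ 1 - cp)
      linarith
    have a2 : (0:ℝ) ≤ 2 + 2/(1-cq) := by
      have := div_nonneg (by norm_num : (0:ℝ) ≤ 2) (by linarith : (0:ℝ) ≤ 1 - cq)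
      linarith
    have a3 : (0:ℝ) ≤ 2 + 2/(1-cd) := by
      have := div_nonneg (by norm_num : (0:ℝ) ≤ 2) (by linarith : (0:ℝ) ≤ 1 - cd)
      linarith
    positivity
  -- nonnegativity of nested integrals
  have g4nn : ∀ t1 t2 t3 t4 : ℝ, 0 ≤ rho β (t1 - t2) ^ p * rho β (t3 - t4) ^ p
      * rho β (t1 - t3) ^ B13 * rho β (t1 - t4) ^ B14 * rho β (t2 - t3) ^ B23
      * rho β (t2 - t4) ^ B24 := by
    intro t1 t2 t3 t4
    have h := rho_nonneg
    exact mul_nonneg (mul_nonneg (mul_nonneg (mul_nonneg (mul_nonneg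
      (pow_nonneg (h β _) p) (pow_nonneg (h β _) p)) (pow_nonneg (h β _) B13))
      (pow_nonneg (h β _) B14)) (pow_nonneg (h β _) B23)) (pow_nonneg (h β _) B24)
  have i4 : ∀ (L : ℝ), 0 ≤ L → ∀ t1 t2 t3 : ℝ,
      0 ≤ ∫ t4 in (0:ℝ)..L, rho β (t1 - t2) ^ p * rho β (t3 - t4) ^ p
        * rho β (t1 - t3) ^ B13 * rho β (t1 - t4) ^ B14 * rho β (t2 - t3) ^ B23
        * rho β (t2 - t4) ^ B24 :=
    fun L hL0 t1 t2 t3 => intervalIntegral.integral_nonneg hL0 (fun t4 _ => g4nn t1 t2 t3 t4)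
  have i3 : ∀ (L : ℝ), 0 ≤ L → ∀ t1 t2 : ℝ,
      0 ≤ ∫ t3 in (0:ℝ)..L, ∫ t4 in (0:ℝ)..L, rho β (t1 - t2) ^ p * rho β (t3 - t4) ^ p
        * rho β (t1 - t3) ^ B13 * rho β (t1 - t4) ^ B14 * rho β (t2 - t3) ^ B23
        * rho β (t2 - t4) ^ B24 :=
    fun L hL0 t1 t2 => intervalIntegral.integral_nonneg hL0 (fun t3 _ => i4 L hL0 t1 t2 t3)
  have i2 : ∀ (L : ℝ), 0 ≤ L → ∀ t1 : ℝ,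
      0 ≤ ∫ t2 in (0:ℝ)..L, ∫ t3 in (0:ℝ)..L, ∫ t4 in (0:ℝ)..L,
        rho β (t1 - t2) ^ p * rho β (t3 - t4) ^ p
        * rho β (t1 - t3) ^ B13 * rho β (t1 - t4) ^ B14 * rho β (t2 - t3) ^ B23
        * rho β (t2 - t4) ^ B24 :=
    fun L hL0 t1 => intervalIntegral.integral_nonneg hL0 (fun t2 _ => i3 L hL0 t1 t2)
  have i1 : ∀ (L : ℝ), 0 ≤ L →
      0 ≤ ∫ t1 in (0:ℝ)..L, ∫ t2 in (0:ℝ)..L, ∫ t3 in (0:ℝ)..L, ∫ t4 in (0:ℝ)..L,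
        rho β (t1 - t2) ^ p * rho β (t3 - t4) ^ p
        * rho β (t1 - t3) ^ B13 * rho β (t1 - t4) ^ B14 * rho β (t2 - t3) ^ B23
        * rho β (t2 - t4) ^ B24 :=
    fun L hL0 => intervalIntegral.integral_nonneg hL0 (fun t1 _ => i2 L hL0 t1)
  have h1' : B13 + B14 = q := by omega
  have h2' : B23 + B24 = q := by omega
  -- the key quantitative bound
  have key : ∀ L : ℝ, 1 ≤ L →
      (∫ t1 in (0:ℝ)..L, ∫ t2 in (0:ℝ)..L, ∫ t3 in (0:ℝ)..L, ∫ t4 in (0:ℝ)..L,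
        rho β (t1 - t2) ^ p * rho β (t3 - t4) ^ p
        * rho β (t1 - t3) ^ B13 * rho β (t1 - t4) ^ B14 * rho β (t2 - t3) ^ B23
        * rho β (t2 - t4) ^ B24) ≤ Ctot * L ^ θ := by
    intro L hL
    have hL0 : (0:ℝ) ≤ L := by linarith
    have hLpos : (0:ℝ) < L := by linarith
    have lvl4 : ∀ t1 t2 t3 : ℝ, ENNReal.ofReal (∫ t4 in (0:ℝ)..L,
        rho β (t1 - t2) ^ p * rho β (t3 - t4) ^ p
        * rho β (t1 - t3) ^ B13 * rho β (t1 - t4) ^ B14 * rho β (t2 - t3) ^ B23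
        * rho β (t2 - t4) ^ B24)
        ≤ ∫⁻ t4 in Ioc (0:ℝ) L, ENNReal.ofReal (rho β (t1 - t2) ^ p * rho β (t3 - t4) ^ p
          * rho β (t1 - t3) ^ B13 * rho β (t1 - t4) ^ B14 * rho β (t2 - t3) ^ B23
          * rho β (t2 - t4) ^ B24) :=
      fun t1 t2 t3 => le_trans (ENNReal.ofReal_le_ofReal
        (intII_le_lint _ L hL0 (fun t4 => g4nn t1 t2 t3 t4))) ENNReal.ofReal_toReal_le
    have lvl3 : ∀ t1 t2 : ℝ, ENNReal.ofReal (∫ t3 in (0:ℝ)..L, ∫ t4 in (0:ℝ)..L,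
        rho β (t1 - t2) ^ p * rho β (t3 - t4) ^ p
        * rho β (t1 - t3) ^ B13 * rho β (t1 - t4) ^ B14 * rho β (t2 - t3) ^ B23
        * rho β (t2 - t4) ^ B24)
        ≤ ∫⁻ t3 in Ioc (0:ℝ) L, ∫⁻ t4 in Ioc (0:ℝ) L,
          ENNReal.ofReal (rho β (t1 - t2) ^ p * rho β (t3 - t4) ^ p
          * rho β (t1 - t3) ^ B13 * rho β (t1 - t4) ^ B14 * rho β (t2 - t3) ^ B23
          * rho β (t2 - t4) ^ B24) :=
      fun t1 t2 => le_trans (ENNReal.ofReal_le_ofReal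
          (intII_le_lint _ L hL0 (fun t3 => i4 L hL0 t1 t2 t3)))
        (le_trans ENNReal.ofReal_toReal_le (lintegral_mono (fun t3 => lvl4 t1 t2 t3)))
    have lvl2 : ∀ t1 : ℝ, ENNReal.ofReal (∫ t2 in (0:ℝ)..L, ∫ t3 in (0:ℝ)..L,
        ∫ t4 in (0:ℝ)..L, rho β (t1 - t2) ^ p * rho β (t3 - t4) ^ p
        * rho β (t1 - t3) ^ B13 * rho β (t1 - t4) ^ B14 * rho β (t2 - t3) ^ B23
        * rho β (t2 - t4) ^ B24)
        ≤ ∫⁻ t2 in Ioc (0:ℝ) L, ∫⁻ t3 in Ioc (0:ℝ) L, ∫⁻ t4 in Ioc (0:ℝ) L,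
          ENNReal.ofReal (rho β (t1 - t2) ^ p * rho β (t3 - t4) ^ p
          * rho β (t1 - t3) ^ B13 * rho β (t1 - t4) ^ B14 * rho β (t2 - t3) ^ B23
          * rho β (t2 - t4) ^ B24) :=
      fun t1 => le_trans (ENNReal.ofReal_le_ofReal
          (intII_le_lint _ L hL0 (fun t2 => i3 L hL0 t1 t2)))
        (le_trans ENNReal.ofReal_toReal_le (lintegral_mono (fun t2 => lvl3 t1 t2)))
    have main : (∫ t1 in (0:ℝ)..L, ∫ t2 in (0:ℝ)..L, ∫ t3 in (0:ℝ)..L, ∫ t4 in (0:ℝ)..L,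
        rho β (t1 - t2) ^ p * rho β (t3 - t4) ^ p
        * rho β (t1 - t3) ^ B13 * rho β (t1 - t4) ^ B14 * rho β (t2 - t3) ^ B23
        * rho β (t2 - t4) ^ B24)
        ≤ (∫⁻ t1 in Ioc (0:ℝ) L, ENNReal.ofReal (∫ t2 in (0:ℝ)..L, ∫ t3 in (0:ℝ)..L,
          ∫ t4 in (0:ℝ)..L, rho β (t1 - t2) ^ p * rho β (t3 - t4) ^ p
          * rho β (t1 - t3) ^ B13 * rho β (t1 - t4) ^ B14 * rho β (t2 - t3) ^ B23
          * rho β (t2 - t4) ^ B24)).toReal :=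
      intII_le_lint _ L hL0 (fun t1 => i2 L hL0 t1)
    have chain : (∫⁻ t1 in Ioc (0:ℝ) L, ENNReal.ofReal (∫ t2 in (0:ℝ)..L, ∫ t3 in (0:ℝ)..L,
          ∫ t4 in (0:ℝ)..L, rho β (t1 - t2) ^ p * rho β (t3 - t4) ^ p
          * rho β (t1 - t3) ^ B13 * rho β (t1 - t4) ^ B14 * rho β (t2 - t3) ^ B23
          * rho β (t2 - t4) ^ B24))
        ≤ ENNReal.ofReal (Ctot * (L * (L ^ (1-cp) * (L ^ (1-cq) * L ^ (1-cd))))) :=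
      le_trans (lintegral_mono lvl2)
        (key_lint hβ p q B13 B14 B23 B24 h1' h2' hcp0 hcp1 hcpβ hcq0 hcq1 hcqβ
          hcd0 hcd1 hcdβ L hL)
    have harg : (0:ℝ) ≤ Ctot * (L * (L ^ (1-cp) * (L ^ (1-cq) * L ^ (1-cd)))) := by
      have := Real.rpow_nonneg hL0
      exact mul_nonneg hCnn (mul_nonneg hL0 (mul_nonneg (this _) (mul_nonneg (this _) (this _))))
    have hpowθ : L * (L ^ (1-cp) * (L ^ (1-cq) * L ^ (1-cd))) = L ^ θ := by
      nth_rewrite 1 [← Real.rpow_one L]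
      rw [← Real.rpow_add hLpos, ← Real.rpow_add hLpos, ← Real.rpow_add hLpos]
      congr 1
      rw [hθdef]
      ring
    calc (∫ t1 in (0:ℝ)..L, ∫ t2 in (0:ℝ)..L, ∫ t3 in (0:ℝ)..L, ∫ t4 in (0:ℝ)..L,
        rho β (t1 - t2) ^ p * rho β (t3 - t4) ^ p
        * rho β (t1 - t3) ^ B13 * rho β (t1 - t4) ^ B14 * rho β (t2 - t3) ^ B23
        * rho β (t2 - t4) ^ B24)
        ≤ _ := main
      _ ≤ (ENNReal.ofReal (Ctot * (L * (L ^ (1-cp) * (L ^ (1-cq) * L ^ (1-cd)))))).toReal :=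
        ENNReal.toReal_mono ENNReal.ofReal_ne_top chain
      _ = Ctot * (L * (L ^ (1-cp) * (L ^ (1-cq) * L ^ (1-cd)))) := ENNReal.toReal_ofReal harg
      _ = Ctot * L ^ θ := by rw [hpowθ]
  -- squeeze
  apply squeeze_zero' (g := fun L : ℝ => Ctot * L ^ (θ - 2))
  · filter_upwards [eventually_ge_atTop (1:ℝ)] with L hL
    exact div_nonneg (i1 L (by linarith)) (by positivity)
  · filter_upwards [eventually_ge_atTop (1:ℝ)] with L hL
    have hLpos : (0:ℝ) < L := by linarith
    have h2pos : (0:ℝ) < L ^ 2 := by positivity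
    have e : Ctot * L ^ (θ - 2) = Ctot * L ^ θ / L ^ 2 := by
      rw [mul_div_assoc]
      congr 1
      rw [Real.rpow_sub hLpos, show ((2:ℝ)) = ((2:ℕ):ℝ) by norm_num, Real.rpow_natCast]
    rw [e]
    exact (div_le_div_iff_of_pos_right h2pos).2 (key L hL)
  · have h := tendsto_rpow_neg_atTop (show (0:ℝ) < 2 - θ by linarith)
    have e : (fun x : ℝ => x ^ (-(2 - θ))) = fun x : ℝ => x ^ (θ - 2) := by
      funext x
      congr 1
      ring
    rw [e] at h
    simpa using h.const_mul Ctot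
end
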